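/- arXiv:1009.4501 — 3 statements merged into one kernel-verified Lean document; each statement's English description precedes it below -/
import Mathlib

section
/- Let Ω and Ω̃ be open subsets of ℝ³ and F : Ω → Ω̃ a C² diffeomorphism with det DF(y) > 0 for all y ∈ Ω; write M(y) = DF(y). Let ω > 0, let μ, ε, σ : Ω → ℂ^{3×3} and J : Ω → ℂ³ be continuous, and let E, H : Ω → ℂ³ be C¹ vector fields satisfying, pointwise on Ω, curl E = iωμH and curl H = −iω(ε + i σ/ω)E + J. Define on Ω̃ the pull-back fields Ẽ(x) = (M(y)ᵀ)⁻¹E(y), H̃(x) = (M(y)ᵀ)⁻¹H(y), the transformed current J̃(x) = (1/det M(y)) M(y) J(y), and the push-forward coefficients μ̃(x) = M(y) μ(y) M(y)ᵀ / det M(y), ε̃(x) = M(y) ε(y) M(y)ᵀ / det M(y), σ̃(x) = M(y) σ(y) M(y)ᵀ / det M(y), where y = F⁻¹(x). Then, pointwise on Ω̃, curl Ẽ = iωμ̃H̃ and curl H̃ = −iω(ε̃ + i σ̃/ω)Ẽ + J̃. -/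
/-- The Jacobian matrix of a map `F : ℝ³ → ℝ³` at a point `y`. -/
noncomputable def jac (F : (Fin 3 → ℝ) → (Fin 3 → ℝ)) (y : Fin 3 → ℝ) :
    Matrix (Fin 3) (Fin 3) ℝ :=
  Matrix.of fun i j => fderiv ℝ F y (Pi.single j 1) i

/-- Partial derivative `∂ᵢ g` of a scalar (complex-valued) function on ℝ³. -/
noncomputable def pd (i : Fin 3) (g : (Fin 3 → ℝ) → ℂ) (x : Fin 3 → ℝ) : ℂ :=
  fderiv ℝ g x (Pi.single i 1)

/-- The curl of a complex vector field on ℝ³. -/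
noncomputable def curl3 (E : (Fin 3 → ℝ) → (Fin 3 → ℂ)) (x : Fin 3 → ℝ) : Fin 3 → ℂ :=
  ![pd 1 (fun y => E y 2) x - pd 2 (fun y => E y 1) x,
    pd 2 (fun y => E y 0) x - pd 0 (fun y => E y 2) x,
    pd 0 (fun y => E y 1) x - pd 1 (fun y => E y 0) x]

/-- A real 3×3 matrix acting componentwise on ℂ³. -/
noncomputable def mulVecC (M : Matrix (Fin 3) (Fin 3) ℝ) (v : Fin 3 → ℂ) : Fin 3 → ℂ :=
  (M.map (fun a => (a : ℂ))).mulVec v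

/-- A real 3×3 matrix viewed as a complex matrix. -/
noncomputable def toC (M : Matrix (Fin 3) (Fin 3) ℝ) : Matrix (Fin 3) (Fin 3) ℂ :=
  M.map (fun a => (a : ℂ))

lemma clm_apply_sum {M : Type*} [NormedAddCommGroup M] [NormedSpace ℝ M]
    (L : (Fin 3 → ℝ) →L[ℝ] M) (v : Fin 3 → ℝ) :
    L v = ∑ q, v q • L (Pi.single q 1) := by
  conv_lhs => rw [← Finset.univ_sum_single v, map_sum]
  refine Finset.sum_congr rfl fun q _ => ?_
  rw [← map_smul]
  congr 1
  rw [← Pi.single_smul, smul_eq_mul, mul_one]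

lemma curl_pullback (Ωt : Set (Fin 3 → ℝ)) (hΩt : IsOpen Ωt)
    (G : (Fin 3 → ℝ) → (Fin 3 → ℝ)) (hG : ContDiffOn ℝ 2 G Ωt)
    (V Vt : (Fin 3 → ℝ) → (Fin 3 → ℂ)) (x : Fin 3 → ℝ) (hx : x ∈ Ωt)
    (hV : DifferentiableAt ℝ V (G x))
    (hVt : ∀ x' ∈ Ωt, ∀ i, Vt x' i = ∑ p, ((jac G x' p i : ℝ) : ℂ) * V (G x') p) :
    curl3 Vt x = mulVecC (jac G x).adjugate (curl3 V (G x)) := by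
  have hGx : ContDiffAt ℝ 2 G x := hG.contDiffAt (hΩt.mem_nhds hx)
  have hGd : DifferentiableAt ℝ G x := hGx.differentiableAt (by norm_num)
  have hdG : DifferentiableAt ℝ (fderiv ℝ G) x :=
    (hGx.fderiv_right (m := 1) (by norm_num)).differentiableAt (by norm_num)
  have hVp : ∀ p, DifferentiableAt ℝ (fun y' => V y' p) (G x) :=
    fun p => differentiableAt_pi.mp hV p
  set DDG := fderiv ℝ (fderiv ℝ G) x with hDDG
  have hsym : IsSymmSndFDerivAt ℝ G x := hGx.isSymmSndFDerivAt (by simp [minSmoothness_of_isRCLikeNormedField])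
  -- derivative of the entries of the Jacobian of G
  have hA : ∀ p i, HasFDerivAt (fun x' => fderiv ℝ G x' (Pi.single i 1) p)
      (((ContinuousLinearMap.proj p).comp
        (ContinuousLinearMap.apply ℝ (Fin 3 → ℝ) (Pi.single i 1))).comp DDG) x := by
    intro p i
    exact (((ContinuousLinearMap.proj p).comp
      (ContinuousLinearMap.apply ℝ (Fin 3 → ℝ) (Pi.single i 1))).hasFDerivAt).comp x
      hdG.hasFDerivAt
  -- the main pointwise derivative computation
  have hpd : ∀ i j, pd j (fun x' => Vt x' i) x
      = ∑ p, ((jac G x p i : ℂ) *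
          (∑ q, (jac G x q j : ℂ) * pd q (fun y' => V y' p) (G x))
        + V (G x) p * (DDG (Pi.single j 1) (Pi.single i 1) p : ℂ)) := by
    intro i j
    have hev : (fun x' => Vt x' i) =ᶠ[nhds x]
        (fun x' => ∑ p, ((fderiv ℝ G x' (Pi.single i 1) p : ℝ) : ℂ) * V (G x') p) := by
      filter_upwards [hΩt.mem_nhds hx] with x' hx'
      exact hVt x' hx' i
    have hterm : ∀ p : Fin 3, HasFDerivAt
        (fun x' => ((fderiv ℝ G x' (Pi.single i 1) p : ℝ) : ℂ) * V (G x') p)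
        ((((fderiv ℝ G x (Pi.single i 1) p : ℝ) : ℂ)) •
            ((fderiv ℝ (fun y' => V y' p) (G x)).comp (fderiv ℝ G x))
          + (V (G x) p) • (Complex.ofRealCLM.comp
            (((ContinuousLinearMap.proj p).comp
              (ContinuousLinearMap.apply ℝ (Fin 3 → ℝ) (Pi.single i 1))).comp DDG))) x := by
      intro p
      have h1 : HasFDerivAt (fun x' => ((fderiv ℝ G x' (Pi.single i 1) p : ℝ) : ℂ))
          (Complex.ofRealCLM.comp (((ContinuousLinearMap.proj p).comp
            (ContinuousLinearMap.apply ℝ (Fin 3 → ℝ) (Pi.single i 1))).comp DDG)) x :=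
        Complex.ofRealCLM.hasFDerivAt.comp x (hA p i)
      have h2 : HasFDerivAt (fun x' => V (G x') p)
          ((fderiv ℝ (fun y' => V y' p) (G x)).comp (fderiv ℝ G x)) x :=
        ((hVp p).hasFDerivAt).comp x hGd.hasFDerivAt
      exact h1.mul h2
    have hsum : HasFDerivAt
        (fun x' => ∑ p, ((fderiv ℝ G x' (Pi.single i 1) p : ℝ) : ℂ) * V (G x') p)
        (∑ p, ((((fderiv ℝ G x (Pi.single i 1) p : ℝ) : ℂ)) •
            ((fderiv ℝ (fun y' => V y' p) (G x)).comp (fderiv ℝ G x))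
          + (V (G x) p) • (Complex.ofRealCLM.comp
            (((ContinuousLinearMap.proj p).comp
              (ContinuousLinearMap.apply ℝ (Fin 3 → ℝ) (Pi.single i 1))).comp DDG)))) x :=
      HasFDerivAt.fun_sum (fun p _ => hterm p)
    unfold pd
    rw [hev.fderiv_eq, hsum.fderiv]
    rw [ContinuousLinearMap.sum_apply]
    refine Finset.sum_congr rfl fun p _ => ?_
    simp only [ContinuousLinearMap.add_apply, ContinuousLinearMap.smul_apply,
      ContinuousLinearMap.comp_apply, ContinuousLinearMap.proj_apply,
      ContinuousLinearMap.apply_apply, Complex.ofRealCLM_apply, smul_eq_mul]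
    congr 1
    · congr 1
      rw [clm_apply_sum (fderiv ℝ (fun y' => V y' p) (G x)) (fderiv ℝ G x (Pi.single j 1))]
      refine Finset.sum_congr rfl fun q _ => ?_
      rw [Complex.real_smul]
      rfl
  have hs : ∀ p : Fin 3, DDG (Pi.single (2:Fin 3) 1) (Pi.single 1 1) p
      = DDG (Pi.single (1:Fin 3) 1) (Pi.single 2 1) p :=
    fun p => congrFun (hsym _ _) p
  have hs2 : ∀ p : Fin 3, DDG (Pi.single (0:Fin 3) 1) (Pi.single 2 1) p
      = DDG (Pi.single (2:Fin 3) 1) (Pi.single 0 1) p :=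
    fun p => congrFun (hsym _ _) p
  have hs3 : ∀ p : Fin 3, DDG (Pi.single (1:Fin 3) 1) (Pi.single 0 1) p
      = DDG (Pi.single (0:Fin 3) 1) (Pi.single 1 1) p :=
    fun p => congrFun (hsym _ _) p
  funext k
  fin_cases k
  · show pd 1 (fun x' => Vt x' 2) x - pd 2 (fun x' => Vt x' 1) x
        = mulVecC (jac G x).adjugate (curl3 V (G x)) 0
    rw [hpd 2 1, hpd 1 2]
    simp only [mulVecC, Matrix.mulVec, dotProduct, Matrix.map_apply,
      Matrix.adjugate_fin_three, Fin.sum_univ_three, curl3,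
      Matrix.cons_val_zero, Matrix.cons_val_one, Matrix.head_cons,
      Matrix.cons_val', Matrix.empty_val', Matrix.cons_val_fin_one, Matrix.head_fin_const,
      Matrix.cons_val_two, Matrix.tail_cons, Matrix.of_apply, hs]
    push_cast
    ring
  · show pd 2 (fun x' => Vt x' 0) x - pd 0 (fun x' => Vt x' 2) x
        = mulVecC (jac G x).adjugate (curl3 V (G x)) 1
    rw [hpd 0 2, hpd 2 0]
    simp only [mulVecC, Matrix.mulVec, dotProduct, Matrix.map_apply,
      Matrix.adjugate_fin_three, Fin.sum_univ_three, curl3,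
      Matrix.cons_val_zero, Matrix.cons_val_one, Matrix.head_cons,
      Matrix.cons_val', Matrix.empty_val', Matrix.cons_val_fin_one, Matrix.head_fin_const,
      Matrix.cons_val_two, Matrix.tail_cons, Matrix.of_apply, hs2]
    push_cast
    ring
  · show pd 0 (fun x' => Vt x' 1) x - pd 1 (fun x' => Vt x' 0) x
        = mulVecC (jac G x).adjugate (curl3 V (G x)) 2
    rw [hpd 1 0, hpd 0 1]
    simp only [mulVecC, Matrix.mulVec, dotProduct, Matrix.map_apply,
      Matrix.adjugate_fin_three, Fin.sum_univ_three, curl3,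
      Matrix.cons_val_zero, Matrix.cons_val_one, Matrix.head_cons,
      Matrix.cons_val', Matrix.empty_val', Matrix.cons_val_fin_one, Matrix.head_fin_const,
      Matrix.cons_val_two, Matrix.tail_cons, Matrix.of_apply, hs3]
    push_cast
    ring

lemma jac_chain (F G : (Fin 3 → ℝ) → (Fin 3 → ℝ)) (x : Fin 3 → ℝ)
    (hF : DifferentiableAt ℝ F (G x)) (hG : DifferentiableAt ℝ G x) :
    jac (fun x' => F (G x')) x = jac F (G x) * jac G x := by
  ext i j
  have hc : fderiv ℝ (fun x' => F (G x')) x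
      = (fderiv ℝ F (G x)).comp (fderiv ℝ G x) :=
    (hF.hasFDerivAt.comp x hG.hasFDerivAt).fderiv
  simp only [jac, Matrix.of_apply, hc, ContinuousLinearMap.comp_apply, Matrix.mul_apply]
  rw [clm_apply_sum (fderiv ℝ F (G x)) (fderiv ℝ G x (Pi.single j 1)), Finset.sum_apply]
  refine Finset.sum_congr rfl fun q _ => ?_
  simp [mul_comm]

lemma jac_congr_id {f : (Fin 3 → ℝ) → (Fin 3 → ℝ)} {x : Fin 3 → ℝ}
    (h : f =ᶠ[nhds x] id) : jac f x = 1 := by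
  ext i j
  rw [jac, Matrix.of_apply, h.fderiv_eq]
  by_cases hij : i = j <;>
    simp [hij, fderiv_id, Matrix.one_apply, Pi.single_apply, eq_comm]

lemma mulVecC_smul (r : ℝ) (M : Matrix (Fin 3) (Fin 3) ℝ) (v : Fin 3 → ℂ) :
    mulVecC (r • M) v = (r : ℂ) • mulVecC M v := by
  funext i
  simp only [mulVecC, Matrix.map_apply, Matrix.mulVec, dotProduct,
    Matrix.smul_apply, smul_eq_mul, Pi.smul_apply, Complex.ofReal_mul, Finset.mul_sum]
  exact Finset.sum_congr rfl fun j _ => by ring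

lemma toC_mul (M N : Matrix (Fin 3) (Fin 3) ℝ) : toC (M * N) = toC M * toC N := by
  have := Matrix.map_mul (L := M) (M := N) (f := Complex.ofRealHom)
  exact this

lemma toC_one : toC 1 = 1 :=
  Matrix.map_one _ Complex.ofReal_zero Complex.ofReal_one

lemma toC_transpose (M : Matrix (Fin 3) (Fin 3) ℝ) : toC M.transpose = (toC M).transpose :=
  Matrix.transpose_map

/-- Transformation invariance of time-harmonic Maxwell's equations:
if `(E,H)` solve `curl E = iωμH`, `curl H = −iω(ε + iσ/ω)E + J` on `Ω` and
`F : Ω → Ω̃` is a C² orientation-preserving diffeomorphism (with inverse `G`),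
then the pull-back fields `Ẽ, H̃` solve the Maxwell system on `Ω̃` with the
push-forward coefficients `μ̃, ε̃, σ̃` and transformed current `J̃`. -/
theorem maxwell_transformation
    (Ω Ωt : Set (Fin 3 → ℝ)) (hΩ : IsOpen Ω) (hΩt : IsOpen Ωt)
    (F G : (Fin 3 → ℝ) → (Fin 3 → ℝ))
    (hF : ContDiffOn ℝ 2 F Ω) (hG : ContDiffOn ℝ 2 G Ωt)
    (hFmaps : Set.MapsTo F Ω Ωt) (hGmaps : Set.MapsTo G Ωt Ω)
    (hGF : ∀ y ∈ Ω, G (F y) = y) (hFG : ∀ x ∈ Ωt, F (G x) = x)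
    (hdet : ∀ y ∈ Ω, 0 < (jac F y).det)
    (ω : ℝ) (hω : 0 < ω)
    (μ ε σ : (Fin 3 → ℝ) → Matrix (Fin 3) (Fin 3) ℂ)
    (J : (Fin 3 → ℝ) → (Fin 3 → ℂ))
    (hμ : ContinuousOn μ Ω) (hε : ContinuousOn ε Ω) (hσ : ContinuousOn σ Ω)
    (hJ : ContinuousOn J Ω)
    (E H : (Fin 3 → ℝ) → (Fin 3 → ℂ))
    (hE : ContDiffOn ℝ 1 E Ω) (hH : ContDiffOn ℝ 1 H Ω)
    (maxwell1 : ∀ y ∈ Ω, curl3 E y = (Complex.I * ω) • (μ y).mulVec (H y))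
    (maxwell2 : ∀ y ∈ Ω, curl3 H y =
      (-(Complex.I * ω)) • ((ε y + (Complex.I * (ω : ℂ)⁻¹) • σ y).mulVec (E y)) + J y)
    (Et Ht Jt : (Fin 3 → ℝ) → (Fin 3 → ℂ))
    (μt εt σt : (Fin 3 → ℝ) → Matrix (Fin 3) (Fin 3) ℂ)
    (hEt : ∀ x ∈ Ωt, Et x = mulVecC ((jac F (G x)).transpose)⁻¹ (E (G x)))
    (hHt : ∀ x ∈ Ωt, Ht x = mulVecC ((jac F (G x)).transpose)⁻¹ (H (G x)))
    (hJt : ∀ x ∈ Ωt, Jt x =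
      (((jac F (G x)).det : ℂ))⁻¹ • mulVecC (jac F (G x)) (J (G x)))
    (hμt : ∀ x ∈ Ωt, μt x = (((jac F (G x)).det : ℂ))⁻¹ •
      (toC (jac F (G x)) * μ (G x) * (toC (jac F (G x))).transpose))
    (hεt : ∀ x ∈ Ωt, εt x = (((jac F (G x)).det : ℂ))⁻¹ •
      (toC (jac F (G x)) * ε (G x) * (toC (jac F (G x))).transpose))
    (hσt : ∀ x ∈ Ωt, σt x = (((jac F (G x)).det : ℂ))⁻¹ •
      (toC (jac F (G x)) * σ (G x) * (toC (jac F (G x))).transpose)) :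
    (∀ x ∈ Ωt, curl3 Et x = (Complex.I * ω) • (μt x).mulVec (Ht x)) ∧
    (∀ x ∈ Ωt, curl3 Ht x =
      (-(Complex.I * ω)) • ((εt x + (Complex.I * (ω : ℂ)⁻¹) • σt x).mulVec (Et x)) + Jt x) := by
  have hdetM : ∀ x ∈ Ωt, (jac F (G x)).det ≠ 0 :=
    fun x hx => ne_of_gt (hdet _ (hGmaps hx))
  have hMB : ∀ x ∈ Ωt, jac F (G x) * jac G x = 1 := by
    intro x hx
    have hFd : DifferentiableAt ℝ F (G x) :=
      (hF.contDiffAt (hΩ.mem_nhds (hGmaps hx))).differentiableAt (by norm_num)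
    have hGd : DifferentiableAt ℝ G x :=
      (hG.contDiffAt (hΩt.mem_nhds hx)).differentiableAt (by norm_num)
    rw [← jac_chain F G x hFd hGd]
    apply jac_congr_id
    filter_upwards [hΩt.mem_nhds hx] with z hz
    exact hFG z hz
  have hBM : ∀ x ∈ Ωt, jac G x * jac F (G x) = 1 := by
    intro x hx
    have hy : G x ∈ Ω := hGmaps hx
    have hxx : F (G x) = x := hFG x hx
    have hFd : DifferentiableAt ℝ F (G x) :=
      (hF.contDiffAt (hΩ.mem_nhds hy)).differentiableAt (by norm_num)
    have hGd : DifferentiableAt ℝ G (F (G x)) := by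
      rw [hxx]; exact (hG.contDiffAt (hΩt.mem_nhds hx)).differentiableAt (by norm_num)
    have h1 := jac_chain G F (G x) hGd hFd
    rw [hxx] at h1
    rw [← h1]
    apply jac_congr_id
    filter_upwards [hΩ.mem_nhds hy] with z hz
    exact hGF z hz
  have hTinv : ∀ x ∈ Ωt, ((jac F (G x)).transpose)⁻¹ = (jac G x).transpose :=
    fun x hx => Matrix.inv_eq_left_inv
      (by rw [← Matrix.transpose_mul, hMB x hx, Matrix.transpose_one])
  have hadj : ∀ x ∈ Ωt,
      (jac G x).adjugate = ((jac F (G x)).det)⁻¹ • jac F (G x) := by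
    intro x hx
    have h1 : (jac G x).adjugate
        = jac F (G x) * (jac G x * (jac G x).adjugate) := by
      rw [← Matrix.mul_assoc, hMB x hx, one_mul]
    rw [Matrix.mul_adjugate] at h1
    have hdetB : (jac G x).det = ((jac F (G x)).det)⁻¹ := by
      apply eq_inv_of_mul_eq_one_left
      rw [mul_comm, ← Matrix.det_mul, hMB x hx, Matrix.det_one]
    rw [h1, Matrix.mul_smul, mul_one, hdetB]
  -- conjugation identity
  have hconj : ∀ x ∈ Ωt, ∀ (N : Matrix (Fin 3) (Fin 3) ℂ) (v : Fin 3 → ℂ),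
      (toC (jac F (G x)) * N * (toC (jac F (G x))).transpose).mulVec
        (mulVecC ((jac F (G x)).transpose)⁻¹ v)
      = (toC (jac F (G x))).mulVec (N.mulVec v) := by
    intro x hx N v
    have h0 : mulVecC ((jac F (G x)).transpose)⁻¹ v
        = (toC (((jac F (G x)).transpose)⁻¹)).mulVec v := rfl
    have h1 : (toC (jac F (G x))).transpose * toC (((jac F (G x)).transpose)⁻¹) = 1 := by
      rw [← toC_transpose, ← toC_mul,
        Matrix.mul_nonsing_inv _ (isUnit_iff_ne_zero.mpr
          (by rw [Matrix.det_transpose]; exact hdetM x hx)), toC_one]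
    rw [h0, Matrix.mulVec_mulVec, Matrix.mul_assoc (toC (jac F (G x)) * N), h1, mul_one,
      ← Matrix.mulVec_mulVec]
  -- curl transformation for the fields
  have hEt' : ∀ x ∈ Ωt, ∀ i, Et x i = ∑ p, ((jac G x p i : ℝ) : ℂ) * E (G x) p := by
    intro x hx i
    rw [hEt x hx, hTinv x hx]
    simp [mulVecC, Matrix.mulVec, dotProduct, Matrix.map_apply, Matrix.transpose_apply]
  have hHt' : ∀ x ∈ Ωt, ∀ i, Ht x i = ∑ p, ((jac G x p i : ℝ) : ℂ) * H (G x) p := by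
    intro x hx i
    rw [hHt x hx, hTinv x hx]
    simp [mulVecC, Matrix.mulVec, dotProduct, Matrix.map_apply, Matrix.transpose_apply]
  have keyE : ∀ x ∈ Ωt, curl3 Et x
      = (((jac F (G x)).det : ℂ))⁻¹ • (toC (jac F (G x))).mulVec (curl3 E (G x)) := by
    intro x hx
    rw [curl_pullback Ωt hΩt G hG E Et x hx
      ((hE.contDiffAt (hΩ.mem_nhds (hGmaps hx))).differentiableAt one_ne_zero) hEt',
      hadj x hx, mulVecC_smul, Complex.ofReal_inv]
    rfl
  have keyH : ∀ x ∈ Ωt, curl3 Ht x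
      = (((jac F (G x)).det : ℂ))⁻¹ • (toC (jac F (G x))).mulVec (curl3 H (G x)) := by
    intro x hx
    rw [curl_pullback Ωt hΩt G hG H Ht x hx
      ((hH.contDiffAt (hΩ.mem_nhds (hGmaps hx))).differentiableAt one_ne_zero) hHt',
      hadj x hx, mulVecC_smul, Complex.ofReal_inv]
    rfl
  constructor
  · intro x hx
    rw [keyE x hx, maxwell1 (G x) (hGmaps hx), hμt x hx, hHt x hx,
      Matrix.smul_mulVec, hconj x hx (μ (G x)) (H (G x)),
      Matrix.mulVec_smul, smul_comm]
  · intro x hx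
    rw [keyH x hx, maxwell2 (G x) (hGmaps hx), hεt x hx, hσt x hx, hJt x hx, hEt x hx]
    have hmat : toC (jac F (G x)) * ε (G x) * (toC (jac F (G x))).transpose
        + (Complex.I * (ω : ℂ)⁻¹) • (toC (jac F (G x)) * σ (G x) * (toC (jac F (G x))).transpose)
        = toC (jac F (G x)) * (ε (G x) + (Complex.I * (ω : ℂ)⁻¹) • σ (G x))
          * (toC (jac F (G x))).transpose := by
      rw [Matrix.mul_add, Matrix.add_mul, Matrix.mul_smul, Matrix.smul_mul]
    rw [smul_comm (Complex.I * (ω : ℂ)⁻¹) (((jac F (G x)).det : ℂ))⁻¹, ← smul_add, hmat,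
      Matrix.smul_mulVec, hconj x hx _ (E (G x)),
      Matrix.mulVec_add, Matrix.mulVec_smul, smul_add, smul_comm]
    rfl
end

section
/- Fix ω > 0, ε₀ > 0, μ₀ > 0, an integer n ≥ 1, and set k = (ε₀μ₀)^{1/2}; assume j_n(kω) ≠ 0. Then, as ρ → 0⁺, the transmission ratios satisfy t₁(ρ) = O(ρ^{2n+1}), t₂(ρ) = O(ρ^{n+1}), t₃(ρ) = O(ρ^{2n+1}), and t₄(ρ) = O(ρ^{n+1}); in particular the denominators of t₁(ρ),…,t₄(ρ) are nonzero for all sufficiently small ρ > 0. -/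
/-- The operator `f ↦ (z ↦ f′(z)/z)` used in the Rayleigh formulas. -/
noncomputable def sphDOp (f : ℂ → ℂ) : ℂ → ℂ := fun z => deriv f z / z

/-- Spherical Bessel function of the first kind:
`j_n(z) = (−z)^n (z⁻¹ d/dz)^n (sin z / z)`. -/
noncomputable def sbj (n : ℕ) (z : ℂ) : ℂ :=
  (-z) ^ n * sphDOp^[n] (fun w => Complex.sin w / w) z

/-- Spherical Bessel function of the second kind:
`y_n(z) = −(−z)^n (z⁻¹ d/dz)^n (cos z / z)`. -/
noncomputable def sby (n : ℕ) (z : ℂ) : ℂ :=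
  -((-z) ^ n * sphDOp^[n] (fun w => Complex.cos w / w) z)

/-- Spherical Hankel function of the first kind `h_n = j_n + i y_n`. -/
noncomputable def sbh (n : ℕ) (z : ℂ) : ℂ := sbj n z + Complex.I * sby n z

/-- `𝒥_n(z) = j_n(z) + z j_n′(z)`. -/
noncomputable def sbJ (n : ℕ) (z : ℂ) : ℂ := sbj n z + z * deriv (sbj n) z

/-- `𝓗_n(z) = h_n(z) + z h_n′(z)`. -/
noncomputable def sbH (n : ℕ) (z : ℂ) : ℂ := sbh n z + z * deriv (sbh n) z

/-- `x^{−1/2}` for a positive real `x`, as a complex number. -/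
noncomputable def invSqrtC (x : ℝ) : ℂ := ((Real.sqrt x)⁻¹ : ℝ)

/-- `g(ρ) = O(ρ^s)` as `ρ → 0⁺`. -/
def IsBigORho (g : ℝ → ℂ) (s : ℝ) : Prop :=
  ∃ C : ℝ, 0 < C ∧ ∃ δ : ℝ, 0 < δ ∧
    ∀ ρ : ℝ, 0 < ρ → ρ < δ → ‖g ρ‖ ≤ C * ρ ^ s

/-- The transmission ratio `t₁(ρ)` for the `n`-th mode of the regularized lossless
cloaking problem. -/
noncomputable def t1 (n : ℕ) (ω ε₀ μ₀ k ρ : ℝ) : ℂ :=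
  (invSqrtC ε₀ * (k : ℂ) * sbJ n ((ω * ρ : ℝ) : ℂ) * sbj n ((k * ω : ℝ) : ℂ)
      - invSqrtC μ₀ * (ρ : ℂ) * sbj n ((ω * ρ : ℝ) : ℂ) * sbJ n ((k * ω : ℝ) : ℂ)) /
  (invSqrtC μ₀ * (ρ : ℂ) * sbh n ((ω * ρ : ℝ) : ℂ) * sbJ n ((k * ω : ℝ) : ℂ)
      - invSqrtC ε₀ * (k : ℂ) * sbH n ((ω * ρ : ℝ) : ℂ) * sbj n ((k * ω : ℝ) : ℂ))

/-- The transmission ratio `t₂(ρ)`. -/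
noncomputable def t2 (n : ℕ) (ω ε₀ μ₀ k ρ : ℝ) : ℂ :=
  ((k : ℂ) * (ρ : ℂ) * sbJ n ((ω * ρ : ℝ) : ℂ) * sbh n ((ω * ρ : ℝ) : ℂ)
      - (k : ℂ) * (ρ : ℂ) * sbj n ((ω * ρ : ℝ) : ℂ) * sbH n ((ω * ρ : ℝ) : ℂ)) /
  (invSqrtC μ₀ * (ρ : ℂ) * sbJ n ((k * ω : ℝ) : ℂ) * sbh n ((ω * ρ : ℝ) : ℂ)
      - invSqrtC ε₀ * (k : ℂ) * sbj n ((k * ω : ℝ) : ℂ) * sbH n ((ω * ρ : ℝ) : ℂ))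

/-- The transmission ratio `t₃(ρ)`. -/
noncomputable def t3 (n : ℕ) (ω ε₀ μ₀ k ρ : ℝ) : ℂ :=
  (invSqrtC μ₀ * (k : ℂ) * sbJ n ((ω * ρ : ℝ) : ℂ) * sbj n ((k * ω : ℝ) : ℂ)
      - invSqrtC ε₀ * (ρ : ℂ) * sbj n ((ω * ρ : ℝ) : ℂ) * sbJ n ((k * ω : ℝ) : ℂ)) /
  (invSqrtC ε₀ * (ρ : ℂ) * sbh n ((ω * ρ : ℝ) : ℂ) * sbJ n ((k * ω : ℝ) : ℂ)
      - invSqrtC μ₀ * (k : ℂ) * sbH n ((ω * ρ : ℝ) : ℂ) * sbj n ((k * ω : ℝ) : ℂ))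

/-- The transmission ratio `t₄(ρ)`. -/
noncomputable def t4 (n : ℕ) (ω ε₀ μ₀ k ρ : ℝ) : ℂ :=
  ((ρ : ℂ) * sbJ n ((ω * ρ : ℝ) : ℂ) * sbh n ((ω * ρ : ℝ) : ℂ)
      - (ρ : ℂ) * sbj n ((ω * ρ : ℝ) : ℂ) * sbH n ((ω * ρ : ℝ) : ℂ)) /
  (invSqrtC ε₀ * (ρ : ℂ) * sbJ n ((k * ω : ℝ) : ℂ) * sbh n ((ω * ρ : ℝ) : ℂ)
      - invSqrtC μ₀ * (k : ℂ) * sbj n ((k * ω : ℝ) : ℂ) * sbH n ((ω * ρ : ℝ) : ℂ))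


/-! ### Auxiliary development -/

open Complex Filter

/-- double factorial `(2j-1)!!` -/
noncomputable def dfac : ℕ → ℝ
  | 0 => 1
  | (j+1) => (2*j+1) * dfac j

lemma dfac_pos (j : ℕ) : 0 < dfac j := by
  induction j with
  | zero => norm_num [dfac]
  | succ j ih => simp only [dfac]; positivity

lemma entire_deriv {f : ℂ → ℂ} (hf : Differentiable ℂ f) : Differentiable ℂ (deriv f) := by
  have h : AnalyticOnNhd ℂ f Set.univ := fun z _ => hf.analyticAt z
  exact fun z => (h.deriv z trivial).differentiableAt

lemma entire_dslope {f : ℂ → ℂ} (hf : Differentiable ℂ f) : Differentiable ℂ (dslope f 0) := by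
  intro z
  rcases eq_or_ne z 0 with rfl | hz
  · obtain ⟨p, hp⟩ := hf.analyticAt 0
    exact (HasFPowerSeriesAt.has_fpower_series_dslope_fslope hp).analyticAt.differentiableAt
  · exact (differentiableAt_dslope_of_ne hz).2 (hf z)

lemma dslope_zero_of_ne {f : ℂ → ℂ} (hf0 : f 0 = 0) {z : ℂ} (hz : z ≠ 0) :
    dslope f 0 z = f z / z := by
  rw [dslope_of_ne _ hz, slope_def_field, hf0, sub_zero, sub_zero, div_eq_div_iff] <;> simp [hz]

lemma deriv_odd_of_even {G : ℂ → ℂ} (hGe : ∀ z, G (-z) = G z) :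
    ∀ z, deriv G (-z) = -deriv G z := by
  intro z
  have h1 : deriv (fun x => G (-x)) z = -deriv G (-z) := deriv_comp_neg G z
  have h2 : (fun x => G (-x)) = G := funext hGe
  rw [h2] at h1
  rw [h1]; ring

lemma deriv_zero_of_even {G : ℂ → ℂ} (hGe : ∀ z, G (-z) = G z) : deriv G 0 = 0 := by
  have := deriv_odd_of_even hGe 0
  rw [neg_zero] at this
  have h2 : deriv G 0 + deriv G 0 = 0 := by nth_rewrite 1 [this]; ring
  exact add_self_eq_zero.mp h2

lemma eventuallyEq_of_ne {f g : ℂ → ℂ} (h : ∀ w : ℂ, w ≠ 0 → f w = g w) {z : ℂ} (hz : z ≠ 0) :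
    f =ᶠ[nhds z] g :=
  Filter.eventually_of_mem (isOpen_ne.mem_nhds hz) h

lemma sinFam : ∀ j : ℕ, ∃ G : ℂ → ℂ, Differentiable ℂ G ∧ (∀ z, G (-z) = G z) ∧
    ∀ z : ℂ, z ≠ 0 → sphDOp^[j] (fun w => Complex.sin w / w) z = G z := by
  intro j
  induction j with
  | zero =>
    refine ⟨dslope Complex.sin 0, entire_dslope Complex.differentiable_sin, ?_, ?_⟩
    · intro z
      rcases eq_or_ne z 0 with rfl | hz
      · rw [neg_zero]
      · rw [dslope_zero_of_ne Complex.sin_zero hz,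
          dslope_zero_of_ne Complex.sin_zero (neg_ne_zero.mpr hz), Complex.sin_neg]
        rw [neg_div_neg_eq]
    · intro z hz
      rw [Function.iterate_zero_apply, dslope_zero_of_ne Complex.sin_zero hz]
  | succ j ih =>
    obtain ⟨G, hG, hGe, hrep⟩ := ih
    have hG' : Differentiable ℂ (deriv G) := entire_deriv hG
    have hG'0 : deriv G 0 = 0 := deriv_zero_of_even hGe
    have hG'odd := deriv_odd_of_even hGe
    refine ⟨dslope (deriv G) 0, entire_dslope hG', ?_, ?_⟩
    · intro z
      rcases eq_or_ne z 0 with rfl | hz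
      · rw [neg_zero]
      · rw [dslope_zero_of_ne hG'0 hz, dslope_zero_of_ne hG'0 (neg_ne_zero.mpr hz), hG'odd,
          neg_div_neg_eq]
    · intro z hz
      rw [Function.iterate_succ_apply']
      show deriv (sphDOp^[j] _) z / z = _
      rw [(eventuallyEq_of_ne hrep hz).deriv_eq, dslope_zero_of_ne hG'0 hz]

lemma cosFam : ∀ j : ℕ, ∃ A B : ℂ → ℂ, Differentiable ℂ A ∧ Differentiable ℂ B ∧
    A 0 = (-1)^j * (dfac j : ℂ) ∧ B 0 = 0 ∧
    ∀ z : ℂ, z ≠ 0 → sphDOp^[j] (fun w => Complex.cos w / w) z =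
      (A z * Complex.cos z + B z * Complex.sin z) / z^(2*j+1) := by
  intro j
  induction j with
  | zero =>
    refine ⟨fun _ => 1, fun _ => 0, differentiable_const _, differentiable_const _, by
      simp [dfac], rfl, ?_⟩
    intro z hz
    simp
  | succ j ih =>
    obtain ⟨A, B, hA, hB, hA0, hB0, hrep⟩ := ih
    refine ⟨fun z => z * (deriv A z + B z) - (2*j+1) * A z,
            fun z => z * (deriv B z - A z) - (2*j+1) * B z,
            ?_, ?_, ?_, ?_, ?_⟩
    · exact (differentiable_id.mul ((entire_deriv hA).add hB)).sub (differentiable_const _ |>.mul hA)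
    · exact (differentiable_id.mul ((entire_deriv hB).sub hA)).sub (differentiable_const _ |>.mul hB)
    · show (0:ℂ) * (deriv A 0 + B 0) - (2*(j:ℂ)+1) * A 0 = _
      have : (dfac (j+1) : ℂ) = (2*(j:ℂ)+1) * (dfac j : ℂ) := by
        rw [dfac]; push_cast; ring
      rw [this, hA0]; ring
    · show (0:ℂ) * (deriv B 0 - A 0) - (2*(j:ℂ)+1) * B 0 = 0
      rw [hB0]; ring
    · intro z hz
      rw [Function.iterate_succ_apply']
      show deriv (sphDOp^[j] _) z / z = _
      rw [(eventuallyEq_of_ne hrep hz).deriv_eq]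
      have hN : HasDerivAt (fun w => A w * Complex.cos w + B w * Complex.sin w)
          (deriv A z * Complex.cos z + A z * (-Complex.sin z)
            + (deriv B z * Complex.sin z + B z * Complex.cos z)) z := by
        exact (((hA z).hasDerivAt.mul (Complex.hasDerivAt_cos z)).add
          ((hB z).hasDerivAt.mul (Complex.hasDerivAt_sin z)))
      have hD : HasDerivAt (fun w : ℂ => w^(2*j+1)) (((2*j+1 : ℕ):ℂ) * z^(2*j)) z := by
        simpa using hasDerivAt_pow (2*j+1) z
      have hz21 : z^(2*j+1) ≠ 0 := pow_ne_zero _ hz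
      rw [(hN.fun_div hD hz21).deriv]
      push_cast
      field_simp
      ring

noncomputable def Nf (A B : ℂ → ℂ) : ℂ → ℂ := fun w => A w * Complex.cos w + B w * Complex.sin w

lemma Nf_diff {A B : ℂ → ℂ} (hA : Differentiable ℂ A) (hB : Differentiable ℂ B) :
    Differentiable ℂ (Nf A B) :=
  (hA.mul Complex.differentiable_cos).add (hB.mul Complex.differentiable_sin)

lemma reps (n : ℕ) (hn : 1 ≤ n) (G A B : ℂ → ℂ) (hG : Differentiable ℂ G)
    (hA : Differentiable ℂ A) (hB : Differentiable ℂ B)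
    (hGrep : ∀ z : ℂ, z ≠ 0 → sphDOp^[n] (fun w => Complex.sin w / w) z = G z)
    (hABrep : ∀ z : ℂ, z ≠ 0 → sphDOp^[n] (fun w => Complex.cos w / w) z =
      (A z * Complex.cos z + B z * Complex.sin z) / z^(2*n+1)) :
    ∀ z : ℂ, z ≠ 0 →
      sbj n z = (-1)^n * z^n * G z ∧
      sbJ n z = (-1)^n * z^n * (((n:ℂ)+1) * G z + z * deriv G z) ∧
      sbh n z = ((-1)^n * (z^(2*n+1) * G z - Complex.I * Nf A B z)) / z^(n+1) ∧
      sbH n z = ((-1)^n * (((n:ℂ)+1) * z^(2*n+1) * G z + z^(2*n+2) * deriv G z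
          - Complex.I * (z * deriv (Nf A B) z - (n:ℂ) * Nf A B z))) / z^(n+1) := by
  obtain ⟨m, rfl⟩ : ∃ m, n = m + 1 := ⟨n - 1, (Nat.succ_pred_eq_of_pos hn).symm⟩
  have hsbjrep : ∀ w : ℂ, w ≠ 0 → sbj (m+1) w = (-1)^(m+1) * (w^(m+1) * G w) := by
    intro w hw
    rw [sbj, hGrep w hw, neg_pow]; ring
  have hsbyrep : ∀ w : ℂ, w ≠ 0 → sby (m+1) w = -((-1:ℂ)^(m+1)) * (Nf A B w / w^(m+2)) := by
    intro w hw
    rw [sby, hABrep w hw, neg_pow, Nf]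
    have hp : w^(2*(m+1)+1) = w^(m+1) * w^(m+2) := by rw [← pow_add]; congr 1; omega
    field_simp [hp]
    ring
  intro z hz
  have h1 : HasDerivAt (fun w : ℂ => w^(m+1)) (((m:ℂ)+1) * z^m) z := by
    simpa using hasDerivAt_pow (m+1) z
  have hphi := (h1.fun_mul (hG z).hasDerivAt).const_mul ((-1:ℂ)^(m+1))
  have heqj : sbj (m+1) =ᶠ[nhds z] (fun w : ℂ => (-1)^(m+1) * (w^(m+1) * G w)) :=
    eventuallyEq_of_ne hsbjrep hz
  have hderivj : deriv (sbj (m+1)) z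
      = (-1)^(m+1) * ((((m:ℂ)+1) * z^m) * G z + z^(m+1) * deriv G z) := by
    rw [heqj.deriv_eq, hphi.deriv]
  have hNz : HasDerivAt (Nf A B) (deriv (Nf A B) z) z := ((Nf_diff hA hB) z).hasDerivAt
  have hDpow : HasDerivAt (fun w : ℂ => w^(m+2)) (((m:ℂ)+2) * z^(m+1)) z := by
    simpa using hasDerivAt_pow (m+2) z
  have hpsi := (hNz.fun_div hDpow (pow_ne_zero _ hz)).const_mul (-((-1:ℂ)^(m+1)))
  have heqy : sby (m+1) =ᶠ[nhds z] (fun w : ℂ => -((-1:ℂ)^(m+1)) * (Nf A B w / w^(m+2))) :=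
    eventuallyEq_of_ne hsbyrep hz
  have hderivy : deriv (sby (m+1)) z
      = -((-1:ℂ)^(m+1)) * ((deriv (Nf A B) z * z^(m+2)
          - Nf A B z * (((m:ℂ)+2) * z^(m+1))) / (z^(m+2))^2) := by
    rw [heqy.deriv_eq, hpsi.deriv]
  have hydiff : DifferentiableAt ℂ (sby (m+1)) z :=
    (heqy.differentiableAt_iff).mpr hpsi.differentiableAt
  have hjdiff : DifferentiableAt ℂ (sbj (m+1)) z :=
    (heqj.differentiableAt_iff).mpr hphi.differentiableAt
  have e1 : sbj (m+1) z = (-1)^(m+1) * z^(m+1) * G z := by rw [hsbjrep z hz]; ring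
  have e2 : sbJ (m+1) z = (-1)^(m+1) * z^(m+1) * ((((m:ℕ)+1:ℂ)+1) * G z + z * deriv G z) := by
    rw [sbJ, e1, hderivj]
    push_cast
    ring
  have e3 : sby (m+1) z = -((-1:ℂ)^(m+1)) * (Nf A B z / z^(m+2)) := hsbyrep z hz
  have e5 : sbh (m+1) z
      = ((-1)^(m+1) * (z^(2*(m+1)+1) * G z - Complex.I * Nf A B z)) / z^(m+2) := by
    rw [sbh, e1, e3]
    have hp : z^(2*(m+1)+1) = z^(m+1) * z^(m+2) := by rw [← pow_add]; congr 1; omega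
    field_simp [hp]
    ring
  have hsbh : sbh (m+1) = fun w => sbj (m+1) w + Complex.I * sby (m+1) w := rfl
  have hderivh : deriv (sbh (m+1)) z = deriv (sbj (m+1)) z + Complex.I * deriv (sby (m+1)) z := by
    rw [hsbh, deriv_fun_add hjdiff (hydiff.const_mul _), deriv_const_mul _ hydiff]
  have e7 : sbH (m+1) z = ((-1)^(m+1) * ((((m:ℕ)+1:ℂ)+1) * z^(2*(m+1)+1) * G z
      + z^(2*(m+1)+2) * deriv G z
      - Complex.I * (z * deriv (Nf A B) z - (((m:ℕ)+1:ℂ)) * Nf A B z))) / z^(m+2) := by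
    rw [sbH, hderivh, e5, hderivj, hderivy]
    have hp : z^(2*(m+1)+1) = z^(m+1) * z^(m+2) := by rw [← pow_add]; congr 1; omega
    have hp2 : z^(2*(m+1)+2) = z^m * z^(m+4) := by rw [← pow_add]; congr 1; omega
    field_simp
    push_cast
    ring_nf
  exact ⟨e1, by push_cast at e2 ⊢; convert e2 using 2, e5, by push_cast at e7 ⊢; convert e7 using 2⟩

lemma cabs_sub_le (x y : ℂ) : ‖x - y‖ ≤ ‖x‖ + ‖y‖ := by
  simpa using norm_sub_le x y

lemma cabs_sub_lb (x y : ℂ) : ‖x‖ - ‖y‖ ≤ ‖y - x‖ := by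
  have h := norm_sub_norm_le x y
  rw [norm_sub_rev] at h
  simpa using h

lemma cabs_upper {x y : ℂ} {ε : ℝ} (h : ‖x - y‖ < ε) :
    ‖x‖ ≤ ‖y‖ + ε := by
  have h2 : x = (x - y) + y := by ring
  calc ‖x‖ = ‖(x - y) + y‖ := by rw [← h2]
  _ ≤ ‖x - y‖ + ‖y‖ := norm_add_le _ _
  _ ≤ ‖y‖ + ε := by linarith

lemma cabs_lower {x y : ℂ} {ε : ℝ} (h : ‖x - y‖ < ε) :
    ‖y‖ - ε ≤ ‖x‖ := by
  have h3 := cabs_sub_lb y x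
  have h4 : ‖x - y‖ = ‖x - y‖ := rfl
  have : ‖y‖ - ‖x‖ ≤ ‖x - y‖ := cabs_sub_lb y x
  linarith

lemma cont_bound {F : ℂ → ℂ} (hF : ContinuousAt F 0) {ε : ℝ} (hε : 0 < ε) {ω : ℝ} (hω : 0 < ω) :
    ∃ δ : ℝ, 0 < δ ∧ ∀ ρ : ℝ, 0 < ρ → ρ < δ →
      ‖F ((ω*ρ:ℝ):ℂ) - F 0‖ < ε := by
  rw [Metric.continuousAt_iff] at hF
  obtain ⟨δ', hδ', hball⟩ := hF ε hε
  refine ⟨δ'/ω, div_pos hδ' hω, fun ρ hρ0 hρδ => ?_⟩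
  have hd : dist ((ω*ρ:ℝ):ℂ) 0 < δ' := by
    rw [Complex.dist_eq, sub_zero, Complex.norm_real, Real.norm_eq_abs, abs_of_pos (mul_pos hω hρ0)]
    calc ω * ρ < ω * (δ'/ω) := by exact mul_lt_mul_of_pos_left hρδ hω
    _ = δ' := by field_simp
  have := hball hd
  rwa [Complex.dist_eq] at this

lemma frac_bound {numc denc : ℂ} {Mnum vden : ℝ} (h1 : ‖numc‖ ≤ Mnum)
    (h2 : vden ≤ ‖denc‖) (hv : 0 < vden) :
    ‖numc/denc‖ ≤ Mnum/vden := by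
  rw [norm_div]
  exact div_le_div₀ (le_trans (norm_nonneg _) h1) h1 hv h2

set_option maxHeartbeats 3000000 in
/-- Asymptotics of the transmission ratios of the regularized lossless
EM cloaking problem: `t₁(ρ) = O(ρ^{2n+1})`, `t₂(ρ) = O(ρ^{n+1})`, `t₃(ρ) = O(ρ^{2n+1})`,
`t₄(ρ) = O(ρ^{n+1})` as `ρ → 0⁺`; in particular the denominators are nonzero for all
sufficiently small `ρ > 0`. -/
theorem transmission_ratios_asymptotics
    (ω ε₀ μ₀ : ℝ) (hω : 0 < ω) (hε : 0 < ε₀) (hμ : 0 < μ₀)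
    (n : ℕ) (hn : 1 ≤ n) (k : ℝ) (hk : k = Real.sqrt (ε₀ * μ₀))
    (hjk : sbj n ((k * ω : ℝ) : ℂ) ≠ 0) :
    IsBigORho (fun ρ => t1 n ω ε₀ μ₀ k ρ) (2 * (n : ℝ) + 1) ∧
    IsBigORho (fun ρ => t2 n ω ε₀ μ₀ k ρ) ((n : ℝ) + 1) ∧
    IsBigORho (fun ρ => t3 n ω ε₀ μ₀ k ρ) (2 * (n : ℝ) + 1) ∧
    IsBigORho (fun ρ => t4 n ω ε₀ μ₀ k ρ) ((n : ℝ) + 1) ∧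
    ∃ δ : ℝ, 0 < δ ∧ ∀ ρ : ℝ, 0 < ρ → ρ < δ →
      (invSqrtC μ₀ * (ρ : ℂ) * sbh n ((ω * ρ : ℝ) : ℂ) * sbJ n ((k * ω : ℝ) : ℂ)
          - invSqrtC ε₀ * (k : ℂ) * sbH n ((ω * ρ : ℝ) : ℂ) * sbj n ((k * ω : ℝ) : ℂ) ≠ 0) ∧
      (invSqrtC μ₀ * (ρ : ℂ) * sbJ n ((k * ω : ℝ) : ℂ) * sbh n ((ω * ρ : ℝ) : ℂ)
          - invSqrtC ε₀ * (k : ℂ) * sbj n ((k * ω : ℝ) : ℂ) * sbH n ((ω * ρ : ℝ) : ℂ) ≠ 0) ∧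
      (invSqrtC ε₀ * (ρ : ℂ) * sbh n ((ω * ρ : ℝ) : ℂ) * sbJ n ((k * ω : ℝ) : ℂ)
          - invSqrtC μ₀ * (k : ℂ) * sbH n ((ω * ρ : ℝ) : ℂ) * sbj n ((k * ω : ℝ) : ℂ) ≠ 0) ∧
      (invSqrtC ε₀ * (ρ : ℂ) * sbJ n ((k * ω : ℝ) : ℂ) * sbh n ((ω * ρ : ℝ) : ℂ)
          - invSqrtC μ₀ * (k : ℂ) * sbj n ((k * ω : ℝ) : ℂ) * sbH n ((ω * ρ : ℝ) : ℂ) ≠ 0) := by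
  -- positivity of k
  have hk0 : 0 < k := by rw [hk]; exact Real.sqrt_pos.mpr (mul_pos hε hμ)
  -- the structural families
  obtain ⟨G, hG, hGe, hGrep⟩ := sinFam n
  obtain ⟨A, B, hA, hB, hA0, hB0, hABrep⟩ := cosFam n
  have hreps := reps n hn G A B hG hA hB hGrep hABrep
  -- abbreviations
  obtain ⟨P, hP⟩ : ∃ P : ℂ → ℂ, P = fun z => ((n:ℂ)+1) * G z + z * deriv G z := ⟨_, rfl⟩
  obtain ⟨Φ, hΦ⟩ : ∃ Φ : ℂ → ℂ,
      Φ = fun z => (-1:ℂ)^n * (z^(2*n+1) * G z - Complex.I * Nf A B z) := ⟨_, rfl⟩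
  obtain ⟨Ψ, hΨ⟩ : ∃ Ψ : ℂ → ℂ,
      Ψ = fun z => (-1:ℂ)^n * (((n:ℂ)+1) * z^(2*n+1) * G z + z^(2*n+2) * deriv G z
        - Complex.I * (z * deriv (Nf A B) z - (n:ℂ) * Nf A B z)) := ⟨_, rfl⟩
  obtain ⟨Q, hQ⟩ : ∃ Q : ℂ → ℂ, Q = fun z => P z * Φ z - G z * Ψ z := ⟨_, rfl⟩
  -- differentiability
  have hGd : Differentiable ℂ (deriv G) := entire_deriv hG
  have hNd : Differentiable ℂ (Nf A B) := Nf_diff hA hB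
  have hNd' : Differentiable ℂ (deriv (Nf A B)) := entire_deriv hNd
  have hPdiff : Differentiable ℂ P := by
    rw [hP]; exact ((differentiable_const _).mul hG).add (differentiable_fun_id.mul hGd)
  have hΦdiff : Differentiable ℂ Φ := by
    rw [hΦ]
    exact (((differentiable_pow (2*n+1)).mul hG).sub (hNd.const_mul _)).const_mul _
  have hΨdiff : Differentiable ℂ Ψ := by
    rw [hΨ]
    refine Differentiable.const_mul ?_ _
    exact ((((differentiable_pow (2*n+1)).const_mul _).mul hG).add
      ((differentiable_pow (2*n+2)).mul hGd)).sub
      (((differentiable_fun_id.mul hNd').sub (hNd.const_mul _)).const_mul _)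
  have hQdiff : Differentiable ℂ Q := by
    rw [hQ]; exact (hPdiff.mul hΦdiff).sub (hG.mul hΨdiff)
  -- value of Ψ at zero
  have hsq : ((-1:ℂ)^n) * ((-1:ℂ)^n) = 1 := by
    rw [← pow_add, ← two_mul, pow_mul]; norm_num
  have hN0 : Nf A B 0 = (-1)^n * (dfac n : ℂ) := by
    simp [Nf, hA0, hB0]
  have hΨ0 : Ψ 0 = Complex.I * ((n:ℂ) * (dfac n : ℂ)) := by
    rw [hΨ]
    simp only [zero_pow (by omega : 2*n+1 ≠ 0), zero_pow (by omega : 2*n+2 ≠ 0), hN0]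
    rw [show ((-1:ℂ)^n * (((n:ℂ)+1) * 0 * G 0 + 0 * deriv G 0
        - Complex.I * (0 * deriv (Nf A B) 0 - (n:ℂ) * ((-1)^n * (dfac n : ℂ)))))
      = ((-1:ℂ)^n * ((-1:ℂ)^n)) * (Complex.I * ((n:ℂ) * (dfac n : ℂ))) by ring, hsq, one_mul]
  -- key absolute values
  have hn1 : (1:ℝ) ≤ (n:ℝ) := by exact_mod_cast hn
  obtain ⟨cΨ, hcΨdef⟩ : ∃ c : ℝ, c = ‖Ψ 0‖ := ⟨_, rfl⟩
  have hcΨ : cΨ = (n:ℝ) * dfac n := by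
    rw [hcΨdef, hΨ0, norm_mul, norm_mul, Complex.norm_I, Complex.norm_natCast,
      Complex.norm_real, Real.norm_eq_abs, abs_of_pos (dfac_pos n), one_mul]
  have hcΨpos : 0 < cΨ := by rw [hcΨ]; exact mul_pos (by linarith) (dfac_pos n)
  obtain ⟨ar, har_def⟩ : ∃ a : ℝ, a = (Real.sqrt ε₀)⁻¹ := ⟨_, rfl⟩
  obtain ⟨br, hbr_def⟩ : ∃ b : ℝ, b = (Real.sqrt μ₀)⁻¹ := ⟨_, rfl⟩
  have har : 0 < ar := by rw [har_def]; exact inv_pos.mpr (Real.sqrt_pos.mpr hε)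
  have hbr : 0 < br := by rw [hbr_def]; exact inv_pos.mpr (Real.sqrt_pos.mpr hμ)
  have habs_a : ‖invSqrtC ε₀‖ = ar := by
    rw [invSqrtC, Complex.norm_real, Real.norm_eq_abs, har_def]; exact abs_of_pos (by rw [← har_def]; exact har)
  have habs_b : ‖invSqrtC μ₀‖ = br := by
    rw [invSqrtC, Complex.norm_real, Real.norm_eq_abs, hbr_def]; exact abs_of_pos (by rw [← hbr_def]; exact hbr)
  have habs_k : ‖((k:ℝ):ℂ)‖ = k := by
    rw [Complex.norm_real, Real.norm_eq_abs]; exact abs_of_pos hk0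
  obtain ⟨aj, haj_def⟩ : ∃ a : ℝ, a = ‖sbj n ((k*ω:ℝ):ℂ)‖ := ⟨_, rfl⟩
  have haj : 0 < aj := by rw [haj_def]; exact (norm_pos_iff.mpr hjk)
  obtain ⟨aJ, haJ_def⟩ : ∃ a : ℝ, a = ‖sbJ n ((k*ω:ℝ):ℂ)‖ := ⟨_, rfl⟩
  have haJ : 0 ≤ aJ := by rw [haJ_def]; exact norm_nonneg _
  obtain ⟨g0, hg0⟩ : ∃ a : ℝ, a = ‖G 0‖ := ⟨_, rfl⟩
  obtain ⟨p0, hp0⟩ : ∃ a : ℝ, a = ‖P 0‖ := ⟨_, rfl⟩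
  obtain ⟨f0, hf0⟩ : ∃ a : ℝ, a = ‖Φ 0‖ := ⟨_, rfl⟩
  obtain ⟨q0, hq0⟩ : ∃ a : ℝ, a = ‖Q 0‖ := ⟨_, rfl⟩
  have hg0n : 0 ≤ g0 := by rw [hg0]; exact norm_nonneg _
  have hp0n : 0 ≤ p0 := by rw [hp0]; exact norm_nonneg _
  have hf0n : 0 ≤ f0 := by rw [hf0]; exact norm_nonneg _
  have hq0n : 0 ≤ q0 := by rw [hq0]; exact norm_nonneg _
  -- continuity bounds
  obtain ⟨δ1, hδ1, hb1⟩ := cont_bound (hG 0).continuousAt one_pos hω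
  obtain ⟨δ2, hδ2, hb2⟩ := cont_bound (hPdiff 0).continuousAt one_pos hω
  obtain ⟨δ3, hδ3, hb3⟩ := cont_bound (hΦdiff 0).continuousAt one_pos hω
  obtain ⟨δ4, hδ4, hb4⟩ := cont_bound (hQdiff 0).continuousAt one_pos hω
  obtain ⟨δ5, hδ5, hb5⟩ := cont_bound (hΨdiff 0).continuousAt (half_pos hcΨpos) hω
  -- domination constants
  obtain ⟨e1, he1_def⟩ : ∃ a : ℝ, a = ar*k*(cΨ/2)*aj := ⟨_, rfl⟩
  obtain ⟨e3, he3_def⟩ : ∃ a : ℝ, a = br*k*(cΨ/2)*aj := ⟨_, rfl⟩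
  have he1 : 0 < e1 := by rw [he1_def]; positivity
  have he3 : 0 < e3 := by rw [he3_def]; positivity
  obtain ⟨d1, hd1_def⟩ : ∃ a : ℝ, a = br*(f0+1)*aJ := ⟨_, rfl⟩
  obtain ⟨d3, hd3_def⟩ : ∃ a : ℝ, a = ar*(f0+1)*aJ := ⟨_, rfl⟩
  have hd1 : 0 ≤ d1 := by rw [hd1_def]; positivity
  have hd3 : 0 ≤ d3 := by rw [hd3_def]; positivity
  obtain ⟨δ6, hδ6_def⟩ : ∃ a : ℝ, a = e1/(2*(d1+1)) := ⟨_, rfl⟩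
  obtain ⟨δ7, hδ7_def⟩ : ∃ a : ℝ, a = e3/(2*(d3+1)) := ⟨_, rfl⟩
  have hδ6 : 0 < δ6 := by rw [hδ6_def]; positivity
  have hδ7 : 0 < δ7 := by rw [hδ7_def]; positivity
  obtain ⟨v1, hv1_def⟩ : ∃ a : ℝ, a = e1/2 := ⟨_, rfl⟩
  obtain ⟨v3, hv3_def⟩ : ∃ a : ℝ, a = e3/2 := ⟨_, rfl⟩
  have hv1 : 0 < v1 := by rw [hv1_def]; positivity
  have hv3 : 0 < v3 := by rw [hv3_def]; positivity
  -- numerator constants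
  obtain ⟨M1, hM1_def⟩ : ∃ a : ℝ, a = ar*k*(p0+1)*aj + br*(g0+1)*aJ := ⟨_, rfl⟩
  obtain ⟨M2, hM2_def⟩ : ∃ a : ℝ, a = k*(q0+1)/ω := ⟨_, rfl⟩
  obtain ⟨M3, hM3_def⟩ : ∃ a : ℝ, a = br*k*(p0+1)*aj + ar*(g0+1)*aJ := ⟨_, rfl⟩
  obtain ⟨M4, hM4_def⟩ : ∃ a : ℝ, a = (q0+1)/ω := ⟨_, rfl⟩
  have hM1 : 0 < M1 := by rw [hM1_def]; positivity
  have hM2 : 0 < M2 := by rw [hM2_def]; positivity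
  have hM3 : 0 < M3 := by rw [hM3_def]; positivity
  have hM4 : 0 < M4 := by rw [hM4_def]; positivity
  obtain ⟨C1, hC1_def⟩ : ∃ a : ℝ, a = M1*ω^(2*n+1)/v1 := ⟨_, rfl⟩
  obtain ⟨C2, hC2_def⟩ : ∃ a : ℝ, a = M2*ω^(n+1)/v1 := ⟨_, rfl⟩
  obtain ⟨C3, hC3_def⟩ : ∃ a : ℝ, a = M3*ω^(2*n+1)/v3 := ⟨_, rfl⟩
  obtain ⟨C4, hC4_def⟩ : ∃ a : ℝ, a = M4*ω^(n+1)/v3 := ⟨_, rfl⟩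
  have hC1 : 0 < C1 := by rw [hC1_def]; positivity
  have hC2 : 0 < C2 := by rw [hC2_def]; positivity
  have hC3 : 0 < C3 := by rw [hC3_def]; positivity
  have hC4 : 0 < C4 := by rw [hC4_def]; positivity
  -- the common δ
  obtain ⟨δ, hδ_def⟩ : ∃ a : ℝ,
      a = min δ1 (min δ2 (min δ3 (min δ4 (min δ5 (min δ6 (min δ7 1)))))) := ⟨_, rfl⟩
  have hδpos : 0 < δ := by
    rw [hδ_def]
    exact lt_min hδ1 (lt_min hδ2 (lt_min hδ3 (lt_min hδ4 (lt_min hδ5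
      (lt_min hδ6 (lt_min hδ7 one_pos))))))
  have hδa : δ ≤ δ1 := hδ_def ▸ min_le_left _ _
  have hδb : δ ≤ δ2 := hδ_def ▸ le_trans (min_le_right _ _) (min_le_left _ _)
  have hδc : δ ≤ δ3 := hδ_def ▸ le_trans (min_le_right _ _)
    (le_trans (min_le_right _ _) (min_le_left _ _))
  have hδd : δ ≤ δ4 := hδ_def ▸ le_trans (min_le_right _ _) (le_trans (min_le_right _ _)
    (le_trans (min_le_right _ _) (min_le_left _ _)))
  have hδe : δ ≤ δ5 := hδ_def ▸ le_trans (min_le_right _ _) (le_trans (min_le_right _ _)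
    (le_trans (min_le_right _ _) (le_trans (min_le_right _ _) (min_le_left _ _))))
  have hδf : δ ≤ δ6 := hδ_def ▸ le_trans (min_le_right _ _) (le_trans (min_le_right _ _)
    (le_trans (min_le_right _ _) (le_trans (min_le_right _ _)
      (le_trans (min_le_right _ _) (min_le_left _ _)))))
  have hδg : δ ≤ δ7 := hδ_def ▸ le_trans (min_le_right _ _) (le_trans (min_le_right _ _)
    (le_trans (min_le_right _ _) (le_trans (min_le_right _ _)
      (le_trans (min_le_right _ _) (le_trans (min_le_right _ _) (min_le_left _ _))))))
  have hδh : δ ≤ 1 := hδ_def ▸ le_trans (min_le_right _ _) (le_trans (min_le_right _ _)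
    (le_trans (min_le_right _ _) (le_trans (min_le_right _ _)
      (le_trans (min_le_right _ _) (le_trans (min_le_right _ _) (min_le_right _ _))))))
  -- the master estimate
  have key : ∀ ρ : ℝ, 0 < ρ → ρ < δ →
      ‖t1 n ω ε₀ μ₀ k ρ‖ ≤ C1 * ρ^(2*n+1) ∧
      ‖t2 n ω ε₀ μ₀ k ρ‖ ≤ C2 * ρ^(n+1) ∧
      ‖t3 n ω ε₀ μ₀ k ρ‖ ≤ C3 * ρ^(2*n+1) ∧
      ‖t4 n ω ε₀ μ₀ k ρ‖ ≤ C4 * ρ^(n+1) ∧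
      (invSqrtC μ₀ * (ρ:ℂ) * sbh n ((ω*ρ:ℝ):ℂ) * sbJ n ((k*ω:ℝ):ℂ)
          - invSqrtC ε₀ * (k:ℂ) * sbH n ((ω*ρ:ℝ):ℂ) * sbj n ((k*ω:ℝ):ℂ) ≠ 0) ∧
      (invSqrtC μ₀ * (ρ:ℂ) * sbJ n ((k*ω:ℝ):ℂ) * sbh n ((ω*ρ:ℝ):ℂ)
          - invSqrtC ε₀ * (k:ℂ) * sbj n ((k*ω:ℝ):ℂ) * sbH n ((ω*ρ:ℝ):ℂ) ≠ 0) ∧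
      (invSqrtC ε₀ * (ρ:ℂ) * sbh n ((ω*ρ:ℝ):ℂ) * sbJ n ((k*ω:ℝ):ℂ)
          - invSqrtC μ₀ * (k:ℂ) * sbH n ((ω*ρ:ℝ):ℂ) * sbj n ((k*ω:ℝ):ℂ) ≠ 0) ∧
      (invSqrtC ε₀ * (ρ:ℂ) * sbJ n ((k*ω:ℝ):ℂ) * sbh n ((ω*ρ:ℝ):ℂ)
          - invSqrtC μ₀ * (k:ℂ) * sbj n ((k*ω:ℝ):ℂ) * sbH n ((ω*ρ:ℝ):ℂ) ≠ 0) := by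
    intro ρ hρ0 hρδ
    have hρ1 : ρ < δ1 := lt_of_lt_of_le hρδ hδa
    have hρ2 : ρ < δ2 := lt_of_lt_of_le hρδ hδb
    have hρ3 : ρ < δ3 := lt_of_lt_of_le hρδ hδc
    have hρ4 : ρ < δ4 := lt_of_lt_of_le hρδ hδd
    have hρ5 : ρ < δ5 := lt_of_lt_of_le hρδ hδe
    have hρ6 : ρ < δ6 := lt_of_lt_of_le hρδ hδf
    have hρ7 : ρ < δ7 := lt_of_lt_of_le hρδ hδg
    have hρone : ρ ≤ 1 := le_of_lt (lt_of_lt_of_le hρδ hδh)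
    have hωρ : 0 < ω * ρ := mul_pos hω hρ0
    have hz0 : ((ω*ρ:ℝ):ℂ) ≠ 0 := Complex.ofReal_ne_zero.mpr (ne_of_gt hωρ)
    have habsz : ‖((ω*ρ:ℝ):ℂ)‖ = ω*ρ := by
      rw [Complex.norm_real, Real.norm_eq_abs]; exact abs_of_pos hωρ
    have habsρ : ‖((ρ:ℝ):ℂ)‖ = ρ := by
      rw [Complex.norm_real, Real.norm_eq_abs]; exact abs_of_pos hρ0
    obtain ⟨ej, eJ, eh, eH⟩ := hreps ((ω*ρ:ℝ):ℂ) hz0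
    have eJ' : sbJ n ((ω*ρ:ℝ):ℂ) = (-1)^n * ((ω*ρ:ℝ):ℂ)^n * P ((ω*ρ:ℝ):ℂ) := by
      rw [hP]; exact eJ
    have eh' : sbh n ((ω*ρ:ℝ):ℂ) = Φ ((ω*ρ:ℝ):ℂ) / ((ω*ρ:ℝ):ℂ)^(n+1) := by
      rw [hΦ]; exact eh
    have eH' : sbH n ((ω*ρ:ℝ):ℂ) = Ψ ((ω*ρ:ℝ):ℂ) / ((ω*ρ:ℝ):ℂ)^(n+1) := by
      rw [hΨ]; exact eH
    -- pointwise bounds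
    have bG : ‖G ((ω*ρ:ℝ):ℂ)‖ ≤ g0 + 1 := by
      rw [hg0]; exact cabs_upper (hb1 ρ hρ0 hρ1)
    have bP : ‖P ((ω*ρ:ℝ):ℂ)‖ ≤ p0 + 1 := by
      rw [hp0]; exact cabs_upper (hb2 ρ hρ0 hρ2)
    have bΦ : ‖Φ ((ω*ρ:ℝ):ℂ)‖ ≤ f0 + 1 := by
      rw [hf0]; exact cabs_upper (hb3 ρ hρ0 hρ3)
    have bQ : ‖Q ((ω*ρ:ℝ):ℂ)‖ ≤ q0 + 1 := by
      rw [hq0]; exact cabs_upper (hb4 ρ hρ0 hρ4)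
    have bΨ : cΨ/2 ≤ ‖Ψ ((ω*ρ:ℝ):ℂ)‖ := by
      have := cabs_lower (hb5 ρ hρ0 hρ5)
      rw [← hcΨdef] at this
      linarith only [this]
    have bΨup : ‖Ψ ((ω*ρ:ℝ):ℂ)‖ ≤ cΨ + cΨ/2 := by
      have := cabs_upper (hb5 ρ hρ0 hρ5)
      rw [← hcΨdef] at this
      linarith only [this]
    -- denominator brackets
    have domin1 : ρ * d1 < e1/2 := by
      have h := mul_lt_mul_of_pos_right hρ6 (show (0:ℝ) < d1+1 by linarith)
      rw [hδ6_def] at h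
      have h2 : e1/(2*(d1+1)) * (d1+1) = e1/2 := by field_simp
      have h3 : ρ*d1 ≤ ρ*(d1+1) := by nlinarith only [hρ0]
      linarith only [h, h2, h3]
    have domin3 : ρ * d3 < e3/2 := by
      have h := mul_lt_mul_of_pos_right hρ7 (show (0:ℝ) < d3+1 by linarith)
      rw [hδ7_def] at h
      have h2 : e3/(2*(d3+1)) * (d3+1) = e3/2 := by field_simp
      have h3 : ρ*d3 ≤ ρ*(d3+1) := by nlinarith only [hρ0]
      linarith only [h, h2, h3]
    have habs_term_a : ‖invSqrtC ε₀ * ((k:ℝ):ℂ) * Ψ ((ω*ρ:ℝ):ℂ)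
        * sbj n ((k*ω:ℝ):ℂ)‖ = ar * k * ‖Ψ ((ω*ρ:ℝ):ℂ)‖ * aj := by
      rw [norm_mul, norm_mul, norm_mul, habs_a, habs_k, haj_def]
    have habs_term_b : ‖invSqrtC μ₀ * ((ρ:ℝ):ℂ) * Φ ((ω*ρ:ℝ):ℂ)
        * sbJ n ((k*ω:ℝ):ℂ)‖ = br * ρ * ‖Φ ((ω*ρ:ℝ):ℂ)‖ * aJ := by
      rw [norm_mul, norm_mul, norm_mul, habs_b, habsρ, haJ_def]
    have habs_term_a3 : ‖invSqrtC μ₀ * ((k:ℝ):ℂ) * Ψ ((ω*ρ:ℝ):ℂ)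
        * sbj n ((k*ω:ℝ):ℂ)‖ = br * k * ‖Ψ ((ω*ρ:ℝ):ℂ)‖ * aj := by
      rw [norm_mul, norm_mul, norm_mul, habs_b, habs_k, haj_def]
    have habs_term_b3 : ‖invSqrtC ε₀ * ((ρ:ℝ):ℂ) * Φ ((ω*ρ:ℝ):ℂ)
        * sbJ n ((k*ω:ℝ):ℂ)‖ = ar * ρ * ‖Φ ((ω*ρ:ℝ):ℂ)‖ * aJ := by
      rw [norm_mul, norm_mul, norm_mul, habs_a, habsρ, haJ_def]
    -- the V brackets
    have hV1 : v1 ≤ ‖invSqrtC μ₀ * ((ρ:ℝ):ℂ) * Φ ((ω*ρ:ℝ):ℂ) * sbJ n ((k*ω:ℝ):ℂ)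
        - invSqrtC ε₀ * ((k:ℝ):ℂ) * Ψ ((ω*ρ:ℝ):ℂ) * sbj n ((k*ω:ℝ):ℂ)‖ := by
      have htri := cabs_sub_lb
        (invSqrtC ε₀ * ((k:ℝ):ℂ) * Ψ ((ω*ρ:ℝ):ℂ) * sbj n ((k*ω:ℝ):ℂ))
        (invSqrtC μ₀ * ((ρ:ℝ):ℂ) * Φ ((ω*ρ:ℝ):ℂ) * sbJ n ((k*ω:ℝ):ℂ))
      rw [habs_term_a, habs_term_b] at htri
      have hlow : e1 ≤ ar * k * ‖Ψ ((ω*ρ:ℝ):ℂ)‖ * aj := by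
        rw [he1_def]
        have := mul_le_mul_of_nonneg_right (mul_le_mul_of_nonneg_left bΨ
          (le_of_lt (mul_pos har hk0))) (le_of_lt haj)
        linarith only [this]
      have hup : br * ρ * ‖Φ ((ω*ρ:ℝ):ℂ)‖ * aJ ≤ ρ * d1 := by
        rw [hd1_def]
        have h1 : br * ρ * ‖Φ ((ω*ρ:ℝ):ℂ)‖ * aJ ≤ br * ρ * (f0+1) * aJ := by
          have := mul_le_mul_of_nonneg_right (mul_le_mul_of_nonneg_left bΦ
            (le_of_lt (mul_pos hbr hρ0))) haJ
          linarith only [this]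
        linarith only [h1]
      rw [hv1_def]
      linarith only [htri, hlow, hup, domin1]
    have hV3 : v3 ≤ ‖invSqrtC ε₀ * ((ρ:ℝ):ℂ) * Φ ((ω*ρ:ℝ):ℂ) * sbJ n ((k*ω:ℝ):ℂ)
        - invSqrtC μ₀ * ((k:ℝ):ℂ) * Ψ ((ω*ρ:ℝ):ℂ) * sbj n ((k*ω:ℝ):ℂ)‖ := by
      have htri := cabs_sub_lb
        (invSqrtC μ₀ * ((k:ℝ):ℂ) * Ψ ((ω*ρ:ℝ):ℂ) * sbj n ((k*ω:ℝ):ℂ))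
        (invSqrtC ε₀ * ((ρ:ℝ):ℂ) * Φ ((ω*ρ:ℝ):ℂ) * sbJ n ((k*ω:ℝ):ℂ))
      rw [habs_term_a3, habs_term_b3] at htri
      have hlow : e3 ≤ br * k * ‖Ψ ((ω*ρ:ℝ):ℂ)‖ * aj := by
        rw [he3_def]
        have := mul_le_mul_of_nonneg_right (mul_le_mul_of_nonneg_left bΨ
          (le_of_lt (mul_pos hbr hk0))) (le_of_lt haj)
        linarith only [this]
      have hup : ar * ρ * ‖Φ ((ω*ρ:ℝ):ℂ)‖ * aJ ≤ ρ * d3 := by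
        rw [hd3_def]
        have h1 : ar * ρ * ‖Φ ((ω*ρ:ℝ):ℂ)‖ * aJ ≤ ar * ρ * (f0+1) * aJ := by
          have := mul_le_mul_of_nonneg_right (mul_le_mul_of_nonneg_left bΦ
            (le_of_lt (mul_pos har hρ0))) haJ
          linarith only [this]
        linarith only [h1]
      rw [hv3_def]
      linarith only [htri, hlow, hup, domin3]
    -- numerator bracket bounds
    have hU1 : ‖invSqrtC ε₀ * ((k:ℝ):ℂ) * P ((ω*ρ:ℝ):ℂ) * sbj n ((k*ω:ℝ):ℂ)
        - invSqrtC μ₀ * ((ρ:ℝ):ℂ) * G ((ω*ρ:ℝ):ℂ) * sbJ n ((k*ω:ℝ):ℂ)‖ ≤ M1 := by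
      have htri := cabs_sub_le
        (invSqrtC ε₀ * ((k:ℝ):ℂ) * P ((ω*ρ:ℝ):ℂ) * sbj n ((k*ω:ℝ):ℂ))
        (invSqrtC μ₀ * ((ρ:ℝ):ℂ) * G ((ω*ρ:ℝ):ℂ) * sbJ n ((k*ω:ℝ):ℂ))
      have h1 : ‖invSqrtC ε₀ * ((k:ℝ):ℂ) * P ((ω*ρ:ℝ):ℂ) * sbj n ((k*ω:ℝ):ℂ)‖
          = ar * k * ‖P ((ω*ρ:ℝ):ℂ)‖ * aj := by
        rw [norm_mul, norm_mul, norm_mul, habs_a, habs_k, haj_def]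
      have h2 : ‖invSqrtC μ₀ * ((ρ:ℝ):ℂ) * G ((ω*ρ:ℝ):ℂ) * sbJ n ((k*ω:ℝ):ℂ)‖
          = br * ρ * ‖G ((ω*ρ:ℝ):ℂ)‖ * aJ := by
        rw [norm_mul, norm_mul, norm_mul, habs_b, habsρ, haJ_def]
      rw [h1, h2] at htri
      have h3 : ar * k * ‖P ((ω*ρ:ℝ):ℂ)‖ * aj ≤ ar*k*(p0+1)*aj := by
        have := mul_le_mul_of_nonneg_right (mul_le_mul_of_nonneg_left bP
          (le_of_lt (mul_pos har hk0))) (le_of_lt haj)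
        linarith only [this]
      have h4 : br * ρ * ‖G ((ω*ρ:ℝ):ℂ)‖ * aJ ≤ br*(g0+1)*aJ := by
        have h5 : br * ρ * ‖G ((ω*ρ:ℝ):ℂ)‖ * aJ ≤ br * ρ * (g0+1) * aJ := by
          have := mul_le_mul_of_nonneg_right (mul_le_mul_of_nonneg_left bG
            (le_of_lt (mul_pos hbr hρ0))) haJ
          linarith only [this]
        have h6 := mul_le_mul_of_nonneg_right
          (mul_le_mul_of_nonneg_left hρone (le_of_lt hbr))
          (mul_nonneg (by linarith only [hg0n] : (0:ℝ) ≤ g0+1) haJ)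
        linarith only [h5, h6]
      rw [hM1_def]
      linarith only [htri, h3, h4]
    have hU3 : ‖invSqrtC μ₀ * ((k:ℝ):ℂ) * P ((ω*ρ:ℝ):ℂ) * sbj n ((k*ω:ℝ):ℂ)
        - invSqrtC ε₀ * ((ρ:ℝ):ℂ) * G ((ω*ρ:ℝ):ℂ) * sbJ n ((k*ω:ℝ):ℂ)‖ ≤ M3 := by
      have htri := cabs_sub_le
        (invSqrtC μ₀ * ((k:ℝ):ℂ) * P ((ω*ρ:ℝ):ℂ) * sbj n ((k*ω:ℝ):ℂ))
        (invSqrtC ε₀ * ((ρ:ℝ):ℂ) * G ((ω*ρ:ℝ):ℂ) * sbJ n ((k*ω:ℝ):ℂ))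
      have h1 : ‖invSqrtC μ₀ * ((k:ℝ):ℂ) * P ((ω*ρ:ℝ):ℂ) * sbj n ((k*ω:ℝ):ℂ)‖
          = br * k * ‖P ((ω*ρ:ℝ):ℂ)‖ * aj := by
        rw [norm_mul, norm_mul, norm_mul, habs_b, habs_k, haj_def]
      have h2 : ‖invSqrtC ε₀ * ((ρ:ℝ):ℂ) * G ((ω*ρ:ℝ):ℂ) * sbJ n ((k*ω:ℝ):ℂ)‖
          = ar * ρ * ‖G ((ω*ρ:ℝ):ℂ)‖ * aJ := by
        rw [norm_mul, norm_mul, norm_mul, habs_a, habsρ, haJ_def]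
      rw [h1, h2] at htri
      have h3 : br * k * ‖P ((ω*ρ:ℝ):ℂ)‖ * aj ≤ br*k*(p0+1)*aj := by
        have := mul_le_mul_of_nonneg_right (mul_le_mul_of_nonneg_left bP
          (le_of_lt (mul_pos hbr hk0))) (le_of_lt haj)
        linarith only [this]
      have h4 : ar * ρ * ‖G ((ω*ρ:ℝ):ℂ)‖ * aJ ≤ ar*(g0+1)*aJ := by
        have h5 : ar * ρ * ‖G ((ω*ρ:ℝ):ℂ)‖ * aJ ≤ ar * ρ * (g0+1) * aJ := by
          have := mul_le_mul_of_nonneg_right (mul_le_mul_of_nonneg_left bG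
            (le_of_lt (mul_pos har hρ0))) haJ
          linarith only [this]
        have h6 := mul_le_mul_of_nonneg_right
          (mul_le_mul_of_nonneg_left hρone (le_of_lt har))
          (mul_nonneg (by linarith only [hg0n] : (0:ℝ) ≤ g0+1) haJ)
        linarith only [h5, h6]
      rw [hM3_def]
      linarith only [htri, h3, h4]
    -- generic conversion facts
    have hωρne : (ω*ρ:ℝ) ≠ 0 := ne_of_gt hωρ
    have hωc : (ω:ℂ) ≠ 0 := Complex.ofReal_ne_zero.mpr (ne_of_gt hω)
    have hρc : (ρ:ℂ) ≠ 0 := Complex.ofReal_ne_zero.mpr (ne_of_gt hρ0)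
    have hv1ne : v1 ≠ 0 := ne_of_gt hv1
    have hv3ne : v3 ≠ 0 := ne_of_gt hv3
    -- t1 estimate
    have ht1 : ‖t1 n ω ε₀ μ₀ k ρ‖ ≤ C1 * ρ^(2*n+1) := by
      rw [t1]
      have hnum_e : invSqrtC ε₀ * ((k:ℝ):ℂ) * sbJ n ((ω*ρ:ℝ):ℂ) * sbj n ((k*ω:ℝ):ℂ)
          - invSqrtC μ₀ * ((ρ:ℝ):ℂ) * sbj n ((ω*ρ:ℝ):ℂ) * sbJ n ((k*ω:ℝ):ℂ)
          = (-1:ℂ)^n * ((ω*ρ:ℝ):ℂ)^n *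
            (invSqrtC ε₀ * ((k:ℝ):ℂ) * P ((ω*ρ:ℝ):ℂ) * sbj n ((k*ω:ℝ):ℂ)
             - invSqrtC μ₀ * ((ρ:ℝ):ℂ) * G ((ω*ρ:ℝ):ℂ) * sbJ n ((k*ω:ℝ):ℂ)) := by
        rw [eJ', ej]; ring
      have hden_e : invSqrtC μ₀ * ((ρ:ℝ):ℂ) * sbh n ((ω*ρ:ℝ):ℂ) * sbJ n ((k*ω:ℝ):ℂ)
          - invSqrtC ε₀ * ((k:ℝ):ℂ) * sbH n ((ω*ρ:ℝ):ℂ) * sbj n ((k*ω:ℝ):ℂ)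
          = (invSqrtC μ₀ * ((ρ:ℝ):ℂ) * Φ ((ω*ρ:ℝ):ℂ) * sbJ n ((k*ω:ℝ):ℂ)
             - invSqrtC ε₀ * ((k:ℝ):ℂ) * Ψ ((ω*ρ:ℝ):ℂ) * sbj n ((k*ω:ℝ):ℂ))
            / ((ω*ρ:ℝ):ℂ)^(n+1) := by
        rw [eh', eH']; ring
      rw [hnum_e, hden_e]
      have hnumabs : ‖(-1:ℂ)^n * ((ω*ρ:ℝ):ℂ)^n *
            (invSqrtC ε₀ * ((k:ℝ):ℂ) * P ((ω*ρ:ℝ):ℂ) * sbj n ((k*ω:ℝ):ℂ)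
             - invSqrtC μ₀ * ((ρ:ℝ):ℂ) * G ((ω*ρ:ℝ):ℂ) * sbJ n ((k*ω:ℝ):ℂ))‖
          ≤ (ω*ρ)^n * M1 := by
        rw [norm_mul, norm_mul, norm_pow, norm_pow, habsz]
        simp only [norm_neg, norm_one, one_pow, one_mul]
        exact mul_le_mul_of_nonneg_left hU1 (pow_nonneg (le_of_lt hωρ) n)
      have hdenabs : v1 / (ω*ρ)^(n+1) ≤ 
         ‖(invSqrtC μ₀ * ((ρ:ℝ):ℂ) * Φ ((ω*ρ:ℝ):ℂ) * sbJ n ((k*ω:ℝ):ℂ)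
             - invSqrtC ε₀ * ((k:ℝ):ℂ) * Ψ ((ω*ρ:ℝ):ℂ) * sbj n ((k*ω:ℝ):ℂ))
            / ((ω*ρ:ℝ):ℂ)^(n+1)‖ := by
        rw [norm_div, norm_pow, habsz]
        exact (div_le_div_iff_of_pos_right (pow_pos hωρ _)).mpr hV1
      calc ‖_‖ ≤ ((ω*ρ)^n * M1)/(v1/(ω*ρ)^(n+1)) :=
            frac_bound hnumabs hdenabs (div_pos hv1 (pow_pos hωρ _))
      _ = C1 * ρ^(2*n+1) := by
        rw [hC1_def, mul_pow]
        field_simp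
        ring
    -- t2 estimate
    have ht2 : ‖t2 n ω ε₀ μ₀ k ρ‖ ≤ C2 * ρ^(n+1) := by
      rw [t2]
      have hnum_e : ((k:ℝ):ℂ) * ((ρ:ℝ):ℂ) * sbJ n ((ω*ρ:ℝ):ℂ) * sbh n ((ω*ρ:ℝ):ℂ)
          - ((k:ℝ):ℂ) * ((ρ:ℝ):ℂ) * sbj n ((ω*ρ:ℝ):ℂ) * sbH n ((ω*ρ:ℝ):ℂ)
          = ((-1:ℂ)^n * ((k:ℝ):ℂ) * ((ρ:ℝ):ℂ) * Q ((ω*ρ:ℝ):ℂ)) / ((ω*ρ:ℝ):ℂ) := by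
        rw [eJ', ej, eh', eH', hQ]
        have hp : ((ω*ρ:ℝ):ℂ)^(n+1) = ((ω*ρ:ℝ):ℂ)^n * ((ω*ρ:ℝ):ℂ) := pow_succ _ _
        field_simp
        ring
      have hden_e : invSqrtC μ₀ * ((ρ:ℝ):ℂ) * sbJ n ((k*ω:ℝ):ℂ) * sbh n ((ω*ρ:ℝ):ℂ)
          - invSqrtC ε₀ * ((k:ℝ):ℂ) * sbj n ((k*ω:ℝ):ℂ) * sbH n ((ω*ρ:ℝ):ℂ)
          = (invSqrtC μ₀ * ((ρ:ℝ):ℂ) * Φ ((ω*ρ:ℝ):ℂ) * sbJ n ((k*ω:ℝ):ℂ)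
             - invSqrtC ε₀ * ((k:ℝ):ℂ) * Ψ ((ω*ρ:ℝ):ℂ) * sbj n ((k*ω:ℝ):ℂ))
            / ((ω*ρ:ℝ):ℂ)^(n+1) := by
        rw [eh', eH']; ring
      rw [hnum_e, hden_e]
      have hnumabs : ‖((-1:ℂ)^n * ((k:ℝ):ℂ) * ((ρ:ℝ):ℂ) * Q ((ω*ρ:ℝ):ℂ))
            / ((ω*ρ:ℝ):ℂ)‖ ≤ M2 := by
        simp only [norm_div, norm_mul, norm_pow, norm_neg, norm_one, one_pow, one_mul,
          habs_k, habsρ, habsz]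
        rw [hM2_def]
        rw [div_le_div_iff₀ hωρ hω]
        have h7 := mul_le_mul_of_nonneg_right
          (mul_le_mul_of_nonneg_left bQ (le_of_lt (mul_pos hk0 hρ0))) (le_of_lt hω)
        linarith only [h7]
      have hdenabs : v1 / (ω*ρ)^(n+1) ≤ 
         ‖(invSqrtC μ₀ * ((ρ:ℝ):ℂ) * Φ ((ω*ρ:ℝ):ℂ) * sbJ n ((k*ω:ℝ):ℂ)
             - invSqrtC ε₀ * ((k:ℝ):ℂ) * Ψ ((ω*ρ:ℝ):ℂ) * sbj n ((k*ω:ℝ):ℂ))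
            / ((ω*ρ:ℝ):ℂ)^(n+1)‖ := by
        rw [norm_div, norm_pow, habsz]
        exact (div_le_div_iff_of_pos_right (pow_pos hωρ _)).mpr hV1
      calc ‖_‖ ≤ M2/(v1/(ω*ρ)^(n+1)) :=
            frac_bound hnumabs hdenabs (div_pos hv1 (pow_pos hωρ _))
      _ = C2 * ρ^(n+1) := by
        rw [hC2_def, mul_pow]
        field_simp
    -- t3 estimate
    have ht3 : ‖t3 n ω ε₀ μ₀ k ρ‖ ≤ C3 * ρ^(2*n+1) := by
      rw [t3]
      have hnum_e : invSqrtC μ₀ * ((k:ℝ):ℂ) * sbJ n ((ω*ρ:ℝ):ℂ) * sbj n ((k*ω:ℝ):ℂ)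
          - invSqrtC ε₀ * ((ρ:ℝ):ℂ) * sbj n ((ω*ρ:ℝ):ℂ) * sbJ n ((k*ω:ℝ):ℂ)
          = (-1:ℂ)^n * ((ω*ρ:ℝ):ℂ)^n *
            (invSqrtC μ₀ * ((k:ℝ):ℂ) * P ((ω*ρ:ℝ):ℂ) * sbj n ((k*ω:ℝ):ℂ)
             - invSqrtC ε₀ * ((ρ:ℝ):ℂ) * G ((ω*ρ:ℝ):ℂ) * sbJ n ((k*ω:ℝ):ℂ)) := by
        rw [eJ', ej]; ring
      have hden_e : invSqrtC ε₀ * ((ρ:ℝ):ℂ) * sbh n ((ω*ρ:ℝ):ℂ) * sbJ n ((k*ω:ℝ):ℂ)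
          - invSqrtC μ₀ * ((k:ℝ):ℂ) * sbH n ((ω*ρ:ℝ):ℂ) * sbj n ((k*ω:ℝ):ℂ)
          = (invSqrtC ε₀ * ((ρ:ℝ):ℂ) * Φ ((ω*ρ:ℝ):ℂ) * sbJ n ((k*ω:ℝ):ℂ)
             - invSqrtC μ₀ * ((k:ℝ):ℂ) * Ψ ((ω*ρ:ℝ):ℂ) * sbj n ((k*ω:ℝ):ℂ))
            / ((ω*ρ:ℝ):ℂ)^(n+1) := by
        rw [eh', eH']; ring
      rw [hnum_e, hden_e]
      have hnumabs : ‖(-1:ℂ)^n * ((ω*ρ:ℝ):ℂ)^n *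
            (invSqrtC μ₀ * ((k:ℝ):ℂ) * P ((ω*ρ:ℝ):ℂ) * sbj n ((k*ω:ℝ):ℂ)
             - invSqrtC ε₀ * ((ρ:ℝ):ℂ) * G ((ω*ρ:ℝ):ℂ) * sbJ n ((k*ω:ℝ):ℂ))‖
          ≤ (ω*ρ)^n * M3 := by
        rw [norm_mul, norm_mul, norm_pow, norm_pow, habsz]
        simp only [norm_neg, norm_one, one_pow, one_mul]
        exact mul_le_mul_of_nonneg_left hU3 (pow_nonneg (le_of_lt hωρ) n)
      have hdenabs : v3 / (ω*ρ)^(n+1) ≤ 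
         ‖(invSqrtC ε₀ * ((ρ:ℝ):ℂ) * Φ ((ω*ρ:ℝ):ℂ) * sbJ n ((k*ω:ℝ):ℂ)
             - invSqrtC μ₀ * ((k:ℝ):ℂ) * Ψ ((ω*ρ:ℝ):ℂ) * sbj n ((k*ω:ℝ):ℂ))
            / ((ω*ρ:ℝ):ℂ)^(n+1)‖ := by
        rw [norm_div, norm_pow, habsz]
        exact (div_le_div_iff_of_pos_right (pow_pos hωρ _)).mpr hV3
      calc ‖_‖ ≤ ((ω*ρ)^n * M3)/(v3/(ω*ρ)^(n+1)) :=
            frac_bound hnumabs hdenabs (div_pos hv3 (pow_pos hωρ _))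
      _ = C3 * ρ^(2*n+1) := by
        rw [hC3_def, mul_pow]
        field_simp
        ring
    -- t4 estimate
    have ht4 : ‖t4 n ω ε₀ μ₀ k ρ‖ ≤ C4 * ρ^(n+1) := by
      rw [t4]
      have hnum_e : ((ρ:ℝ):ℂ) * sbJ n ((ω*ρ:ℝ):ℂ) * sbh n ((ω*ρ:ℝ):ℂ)
          - ((ρ:ℝ):ℂ) * sbj n ((ω*ρ:ℝ):ℂ) * sbH n ((ω*ρ:ℝ):ℂ)
          = ((-1:ℂ)^n * ((ρ:ℝ):ℂ) * Q ((ω*ρ:ℝ):ℂ)) / ((ω*ρ:ℝ):ℂ) := by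
        rw [eJ', ej, eh', eH', hQ]
        have hp : ((ω*ρ:ℝ):ℂ)^(n+1) = ((ω*ρ:ℝ):ℂ)^n * ((ω*ρ:ℝ):ℂ) := pow_succ _ _
        field_simp
        ring
      have hden_e : invSqrtC ε₀ * ((ρ:ℝ):ℂ) * sbJ n ((k*ω:ℝ):ℂ) * sbh n ((ω*ρ:ℝ):ℂ)
          - invSqrtC μ₀ * ((k:ℝ):ℂ) * sbj n ((k*ω:ℝ):ℂ) * sbH n ((ω*ρ:ℝ):ℂ)
          = (invSqrtC ε₀ * ((ρ:ℝ):ℂ) * Φ ((ω*ρ:ℝ):ℂ) * sbJ n ((k*ω:ℝ):ℂ)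
             - invSqrtC μ₀ * ((k:ℝ):ℂ) * Ψ ((ω*ρ:ℝ):ℂ) * sbj n ((k*ω:ℝ):ℂ))
            / ((ω*ρ:ℝ):ℂ)^(n+1) := by
        rw [eh', eH']; ring
      rw [hnum_e, hden_e]
      have hnumabs : ‖((-1:ℂ)^n * ((ρ:ℝ):ℂ) * Q ((ω*ρ:ℝ):ℂ))
            / ((ω*ρ:ℝ):ℂ)‖ ≤ M4 := by
        simp only [norm_div, norm_mul, norm_pow, norm_neg, norm_one, one_pow, one_mul,
          habsρ, habsz]
        rw [hM4_def]
        rw [div_le_div_iff₀ hωρ hω]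
        have h7 := mul_le_mul_of_nonneg_right
          (mul_le_mul_of_nonneg_left bQ (le_of_lt hρ0)) (le_of_lt hω)
        linarith only [h7]
      have hdenabs : v3 / (ω*ρ)^(n+1) ≤ 
         ‖(invSqrtC ε₀ * ((ρ:ℝ):ℂ) * Φ ((ω*ρ:ℝ):ℂ) * sbJ n ((k*ω:ℝ):ℂ)
             - invSqrtC μ₀ * ((k:ℝ):ℂ) * Ψ ((ω*ρ:ℝ):ℂ) * sbj n ((k*ω:ℝ):ℂ))
            / ((ω*ρ:ℝ):ℂ)^(n+1)‖ := by
        rw [norm_div, norm_pow, habsz]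
        exact (div_le_div_iff_of_pos_right (pow_pos hωρ _)).mpr hV3
      calc ‖_‖ ≤ M4/(v3/(ω*ρ)^(n+1)) :=
            frac_bound hnumabs hdenabs (div_pos hv3 (pow_pos hωρ _))
      _ = C4 * ρ^(n+1) := by
        rw [hC4_def, mul_pow]
        field_simp
    -- nonvanishing of the denominators
    have hne1 : invSqrtC μ₀ * ((ρ:ℝ):ℂ) * sbh n ((ω*ρ:ℝ):ℂ) * sbJ n ((k*ω:ℝ):ℂ)
        - invSqrtC ε₀ * ((k:ℝ):ℂ) * sbH n ((ω*ρ:ℝ):ℂ) * sbj n ((k*ω:ℝ):ℂ) ≠ 0 := by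
      intro hzero
      have he : invSqrtC μ₀ * ((ρ:ℝ):ℂ) * Φ ((ω*ρ:ℝ):ℂ) * sbJ n ((k*ω:ℝ):ℂ)
          - invSqrtC ε₀ * ((k:ℝ):ℂ) * Ψ ((ω*ρ:ℝ):ℂ) * sbj n ((k*ω:ℝ):ℂ) = 0 := by
        have h2 : (invSqrtC μ₀ * ((ρ:ℝ):ℂ) * Φ ((ω*ρ:ℝ):ℂ) * sbJ n ((k*ω:ℝ):ℂ)
            - invSqrtC ε₀ * ((k:ℝ):ℂ) * Ψ ((ω*ρ:ℝ):ℂ) * sbj n ((k*ω:ℝ):ℂ))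
            / ((ω*ρ:ℝ):ℂ)^(n+1) = 0 := by
          rw [← hzero, eh', eH']; ring
        field_simp at h2
        push_cast
        simpa [mul_comm] using h2
      rw [he, norm_zero] at hV1
      linarith only [hV1, hv1]
    have hne2 : invSqrtC μ₀ * ((ρ:ℝ):ℂ) * sbJ n ((k*ω:ℝ):ℂ) * sbh n ((ω*ρ:ℝ):ℂ)
        - invSqrtC ε₀ * ((k:ℝ):ℂ) * sbj n ((k*ω:ℝ):ℂ) * sbH n ((ω*ρ:ℝ):ℂ) ≠ 0 := by
      intro hzero
      have he : invSqrtC μ₀ * ((ρ:ℝ):ℂ) * Φ ((ω*ρ:ℝ):ℂ) * sbJ n ((k*ω:ℝ):ℂ)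
          - invSqrtC ε₀ * ((k:ℝ):ℂ) * Ψ ((ω*ρ:ℝ):ℂ) * sbj n ((k*ω:ℝ):ℂ) = 0 := by
        have h2 : (invSqrtC μ₀ * ((ρ:ℝ):ℂ) * Φ ((ω*ρ:ℝ):ℂ) * sbJ n ((k*ω:ℝ):ℂ)
            - invSqrtC ε₀ * ((k:ℝ):ℂ) * Ψ ((ω*ρ:ℝ):ℂ) * sbj n ((k*ω:ℝ):ℂ))
            / ((ω*ρ:ℝ):ℂ)^(n+1) = 0 := by
          rw [← hzero, eh', eH']; ring
        field_simp at h2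
        push_cast
        simpa [mul_comm] using h2
      rw [he, norm_zero] at hV1
      linarith only [hV1, hv1]
    have hne3 : invSqrtC ε₀ * ((ρ:ℝ):ℂ) * sbh n ((ω*ρ:ℝ):ℂ) * sbJ n ((k*ω:ℝ):ℂ)
        - invSqrtC μ₀ * ((k:ℝ):ℂ) * sbH n ((ω*ρ:ℝ):ℂ) * sbj n ((k*ω:ℝ):ℂ) ≠ 0 := by
      intro hzero
      have he : invSqrtC ε₀ * ((ρ:ℝ):ℂ) * Φ ((ω*ρ:ℝ):ℂ) * sbJ n ((k*ω:ℝ):ℂ)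
          - invSqrtC μ₀ * ((k:ℝ):ℂ) * Ψ ((ω*ρ:ℝ):ℂ) * sbj n ((k*ω:ℝ):ℂ) = 0 := by
        have h2 : (invSqrtC ε₀ * ((ρ:ℝ):ℂ) * Φ ((ω*ρ:ℝ):ℂ) * sbJ n ((k*ω:ℝ):ℂ)
            - invSqrtC μ₀ * ((k:ℝ):ℂ) * Ψ ((ω*ρ:ℝ):ℂ) * sbj n ((k*ω:ℝ):ℂ))
            / ((ω*ρ:ℝ):ℂ)^(n+1) = 0 := by
          rw [← hzero, eh', eH']; ring
        field_simp at h2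
        push_cast
        simpa [mul_comm] using h2
      rw [he, norm_zero] at hV3
      linarith only [hV3, hv3]
    have hne4 : invSqrtC ε₀ * ((ρ:ℝ):ℂ) * sbJ n ((k*ω:ℝ):ℂ) * sbh n ((ω*ρ:ℝ):ℂ)
        - invSqrtC μ₀ * ((k:ℝ):ℂ) * sbj n ((k*ω:ℝ):ℂ) * sbH n ((ω*ρ:ℝ):ℂ) ≠ 0 := by
      intro hzero
      have he : invSqrtC ε₀ * ((ρ:ℝ):ℂ) * Φ ((ω*ρ:ℝ):ℂ) * sbJ n ((k*ω:ℝ):ℂ)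
          - invSqrtC μ₀ * ((k:ℝ):ℂ) * Ψ ((ω*ρ:ℝ):ℂ) * sbj n ((k*ω:ℝ):ℂ) = 0 := by
        have h2 : (invSqrtC ε₀ * ((ρ:ℝ):ℂ) * Φ ((ω*ρ:ℝ):ℂ) * sbJ n ((k*ω:ℝ):ℂ)
            - invSqrtC μ₀ * ((k:ℝ):ℂ) * Ψ ((ω*ρ:ℝ):ℂ) * sbj n ((k*ω:ℝ):ℂ))
            / ((ω*ρ:ℝ):ℂ)^(n+1) = 0 := by
          rw [← hzero, eh', eH']; ring
        field_simp at h2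
        push_cast
        simpa [mul_comm] using h2
      rw [he, norm_zero] at hV3
      linarith only [hV3, hv3]
    exact ⟨ht1, ht2, ht3, ht4, hne1, hne2, hne3, hne4⟩
  -- final assembly
  have hrpow1 : ∀ ρ : ℝ, 0 < ρ → ρ ^ (2*(n:ℝ)+1) = ρ^(2*n+1) := by
    intro ρ hρ
    rw [show 2*(n:ℝ)+1 = ((2*n+1 : ℕ) : ℝ) by push_cast; ring, Real.rpow_natCast]
  have hrpow2 : ∀ ρ : ℝ, 0 < ρ → ρ ^ ((n:ℝ)+1) = ρ^(n+1) := by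
    intro ρ hρ
    rw [show (n:ℝ)+1 = ((n+1 : ℕ) : ℝ) by push_cast; ring, Real.rpow_natCast]
  refine ⟨⟨C1, hC1, δ, hδpos, fun ρ h1 h2 => ?_⟩, ⟨C2, hC2, δ, hδpos, fun ρ h1 h2 => ?_⟩,
    ⟨C3, hC3, δ, hδpos, fun ρ h1 h2 => ?_⟩, ⟨C4, hC4, δ, hδpos, fun ρ h1 h2 => ?_⟩,
    δ, hδpos, fun ρ h1 h2 => ?_⟩
  · rw [hrpow1 ρ h1]; exact (key ρ h1 h2).1
  · rw [hrpow2 ρ h1]; exact (key ρ h1 h2).2.1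
  · rw [hrpow1 ρ h1]; exact (key ρ h1 h2).2.2.1
  · rw [hrpow2 ρ h1]; exact (key ρ h1 h2).2.2.2.1
  · exact (key ρ h1 h2).2.2.2.2
end

section
/- Fix ω > 0, ε₀ > 0, μ₀ > 0, an integer n ≥ 1, and set k = (ε₀μ₀)^{1/2}; assume j_n(2ω) ≠ 0 and j_n(kω) ≠ 0, and let f ∈ ℂ. Then there exists δ > 0 such that for every ρ ∈ (0, δ) the 3×3 linear system in the unknowns (c, α, γ) ∈ ℂ³: h_n(2ω)c + j_n(2ω)γ = f; ρ h_n(ωρ)c + ρ j_n(ωρ)γ = ε₀^{−1/2} j_n(kω) α; k 𝓗_n(ωρ)c + k 𝒥_n(ωρ)γ = μ₀^{−1/2} 𝒥_n(kω) α, has a unique solution, and this solution is given explicitly by γ = f / (t₁(ρ) h_n(2ω) + j_n(2ω)), c = t₁(ρ) γ, α = t₂(ρ) γ. -/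
section Aux

/-- The Rayleigh recursion `B_{m+1}(z) = z B_m'(z) - (2m+1) B_m(z)`. -/
noncomputable def recB (f : ℂ → ℂ) : ℕ → ℂ → ℂ
  | 0 => f
  | (m+1) => fun z => z * deriv (recB f m) z - ((2*m+1 : ℕ) : ℂ) * recB f m z

lemma recB_contDiff {f : ℂ → ℂ} (hf : ContDiff ℂ (⊤ : ℕ∞) f) (m : ℕ) :
    ContDiff ℂ (⊤ : ℕ∞) (recB f m) := by
  induction m with
  | zero => exact hf
  | succ m ih =>
    have hd : ContDiff ℂ (⊤ : ℕ∞) (deriv (recB f m)) := (contDiff_infty_iff_deriv.mp ih).2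
    exact (contDiff_id.mul hd).sub (contDiff_const.mul ih)

lemma recB_sin_zero (m : ℕ) : recB Complex.sin m 0 = 0 := by
  induction m with
  | zero => simp [recB]
  | succ m ih => simp [recB, ih]

lemma recB_cos_zero_ne (m : ℕ) : recB Complex.cos m 0 ≠ 0 := by
  induction m with
  | zero => simp [recB]
  | succ m ih =>
    simp only [recB, zero_mul, zero_sub, neg_ne_zero]
    exact mul_ne_zero (by exact_mod_cast Nat.succ_ne_zero (2*m)) ih

lemma solve_system (e m K R h2 j2 hr jr Hr Jr jk Jk f : ℂ)
    (hejk : e * jk ≠ 0)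
    (hD : m * R * hr * Jk - e * K * Hr * jk ≠ 0)
    (hG : (e * K * Jr * jk - m * R * jr * Jk) / (m * R * hr * Jk - e * K * Hr * jk) * h2
        + j2 ≠ 0) :
    (∃! v : ℂ × ℂ × ℂ,
        h2 * v.1 + j2 * v.2.2 = f ∧
        R * hr * v.1 + R * jr * v.2.2 = e * jk * v.2.1 ∧
        K * Hr * v.1 + K * Jr * v.2.2 = m * Jk * v.2.1) ∧
    (∀ v : ℂ × ℂ × ℂ,
      (h2 * v.1 + j2 * v.2.2 = f ∧
       R * hr * v.1 + R * jr * v.2.2 = e * jk * v.2.1 ∧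
       K * Hr * v.1 + K * Jr * v.2.2 = m * Jk * v.2.1) →
      v = ((e * K * Jr * jk - m * R * jr * Jk) / (m * R * hr * Jk - e * K * Hr * jk) *
             (f / ((e * K * Jr * jk - m * R * jr * Jk) / (m * R * hr * Jk - e * K * Hr * jk)
               * h2 + j2)),
           (K * R * Jr * hr - K * R * jr * Hr) / (m * R * Jk * hr - e * K * jk * Hr) *
             (f / ((e * K * Jr * jk - m * R * jr * Jk) / (m * R * hr * Jk - e * K * Hr * jk)
               * h2 + j2)),
           f / ((e * K * Jr * jk - m * R * jr * Jk) / (m * R * hr * Jk - e * K * Hr * jk)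
               * h2 + j2))) := by
  set T1 : ℂ := (e * K * Jr * jk - m * R * jr * Jk) / (m * R * hr * Jk - e * K * Hr * jk)
    with hT1
  set T2 : ℂ := (K * R * Jr * hr - K * R * jr * Hr) / (m * R * Jk * hr - e * K * jk * Hr)
    with hT2
  set γ : ℂ := f / (T1 * h2 + j2) with hγ
  have hG' : T1 * h2 + j2 ≠ 0 := hG
  have hD2 : m * R * Jk * hr - e * K * jk * Hr ≠ 0 := by
    intro h; exact hD (by linear_combination h)
  have id2 : R * hr * T1 + R * jr = e * jk * T2 := by
    have hDD : m * R * Jk * hr - e * K * jk * Hr = m * R * hr * Jk - e * K * Hr * jk := by ring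
    rw [hT1, hT2, hDD, mul_div_assoc', mul_div_assoc', div_add' _ _ _ hD, div_left_inj' hD]
    ring
  have id3 : K * Hr * T1 + K * Jr = m * Jk * T2 := by
    have hDD : m * R * Jk * hr - e * K * jk * Hr = m * R * hr * Jk - e * K * Hr * jk := by ring
    rw [hT1, hT2, hDD, mul_div_assoc', mul_div_assoc', div_add' _ _ _ hD, div_left_inj' hD]
    ring
  have hfG : (T1 * h2 + j2) * γ = f := by
    rw [hγ, mul_div_cancel₀ _ hG']
  have uniq : ∀ v : ℂ × ℂ × ℂ,
      (h2 * v.1 + j2 * v.2.2 = f ∧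
       R * hr * v.1 + R * jr * v.2.2 = e * jk * v.2.1 ∧
       K * Hr * v.1 + K * Jr * v.2.2 = m * Jk * v.2.1) →
      v = (T1 * γ, T2 * γ, γ) := by
    rintro ⟨c, α, g⟩ ⟨e1, e2, e3⟩
    simp only at e1 e2 e3 ⊢
    have hc : (m * R * hr * Jk - e * K * Hr * jk) * c
        = (e * K * Jr * jk - m * R * jr * Jk) * g := by
      linear_combination (m * Jk) * e2 - (e * jk) * e3
    have hc' : c = T1 * g := by
      rw [hT1, div_mul_eq_mul_div, eq_div_iff hD]
      linear_combination hc
    have hg : g = γ := by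
      rw [hγ, eq_div_iff hG']
      linear_combination e1 - h2 * hc'
    have hα : e * jk * α = e * jk * (T2 * g) := by
      linear_combination (-1 : ℂ) * e2 + R * hr * hc' + g * id2
    have hα' : α = T2 * g := mul_left_cancel₀ hejk hα
    simp only [Prod.mk.injEq]
    exact ⟨by rw [hc', hg], by rw [hα', hg], hg⟩
  refine ⟨⟨(T1 * γ, T2 * γ, γ), ⟨?_, ?_, ?_⟩, fun y hy => uniq y hy⟩, uniq⟩
  · simp only; linear_combination hfG
  · simp only; linear_combination γ * id2
  · simp only; linear_combination γ * id3

end Aux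

section Repr

lemma recB_eq {f : ℂ → ℂ} (hf : ContDiff ℂ (⊤ : ℕ∞) f) (m : ℕ) {z : ℂ} (hz : z ≠ 0) :
    sphDOp^[m] (fun w => f w / w) z = recB f m z / z ^ (2*m+1) := by
  induction m generalizing z with
  | zero => simp [recB]
  | succ m ih =>
    rw [Function.iterate_succ_apply']
    have hopen : {w : ℂ | w ≠ 0} ∈ nhds z := isOpen_ne.mem_nhds hz
    have hev : sphDOp^[m] (fun w => f w / w) =ᶠ[nhds z]
        (fun w => recB f m w / w ^ (2*m+1)) :=
      Filter.eventuallyEq_of_mem hopen (fun w hw => ih hw)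
    have hdiff : HasDerivAt (fun w => recB f m w / w ^ (2*m+1))
        ((deriv (recB f m) z * z ^ (2*m+1) - recB f m z * ((2*m+1 : ℕ) * z ^ (2*m+1-1)))
          / (z ^ (2*m+1)) ^ 2) z :=
      (((recB_contDiff hf m).differentiable (by simp) z).hasDerivAt).div
        (hasDerivAt_pow (2*m+1) z) (pow_ne_zero _ hz)
    have hder : deriv (sphDOp^[m] (fun w => f w / w)) z =
        (deriv (recB f m) z * z ^ (2*m+1) - recB f m z * ((2*m+1 : ℕ) * z ^ (2*m+1-1)))
          / (z ^ (2*m+1)) ^ 2 := by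
      rw [hev.deriv_eq, hdiff.deriv]
    show deriv (sphDOp^[m] (fun w => f w / w)) z / z = _
    rw [hder, recB]
    have h1 : z ^ (2*m+1) ≠ 0 := pow_ne_zero _ hz
    simp only [Nat.add_sub_cancel]
    push_cast
    field_simp
    ring

lemma sbj_eq (n : ℕ) {z : ℂ} (hz : z ≠ 0) :
    sbj n z = (-1 : ℂ)^n * recB Complex.sin n z / z ^ (n+1) := by
  rw [sbj, recB_eq Complex.contDiff_sin n hz, neg_pow]
  have : z ^ (2*n+1) ≠ 0 := pow_ne_zero _ hz
  field_simp
  ring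

lemma sbh_eq (n : ℕ) {z : ℂ} (hz : z ≠ 0) :
    sbh n z = (-1 : ℂ)^n * (recB Complex.sin n z - Complex.I * recB Complex.cos n z)
      / z ^ (n+1) := by
  rw [sbh, sby, sbj, recB_eq Complex.contDiff_sin n hz, recB_eq Complex.contDiff_cos n hz,
    neg_pow]
  have : z ^ (2*n+1) ≠ 0 := pow_ne_zero _ hz
  field_simp
  ring

lemma combo_eq {g F : ℂ → ℂ} (hg : ContDiff ℂ (⊤ : ℕ∞) g) (n : ℕ)
    (hF : ∀ w : ℂ, w ≠ 0 → F w = (-1 : ℂ)^n * g w / w ^ (n+1)) {z : ℂ} (hz : z ≠ 0) :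
    F z + z * deriv F z = (-1 : ℂ)^n * (z * deriv g z - n * g z) / z ^ (n+1) := by
  have hopen : {w : ℂ | w ≠ 0} ∈ nhds z := isOpen_ne.mem_nhds hz
  have hev : F =ᶠ[nhds z] (fun w => (-1 : ℂ)^n * g w / w ^ (n+1)) :=
    Filter.eventuallyEq_of_mem hopen (fun w hw => hF w hw)
  have hdiff : HasDerivAt (fun w => (-1 : ℂ)^n * g w / w ^ (n+1))
      (((-1 : ℂ)^n * deriv g z * z ^ (n+1) - (-1 : ℂ)^n * g z * ((n+1 : ℕ) * z ^ (n+1-1)))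
        / (z ^ (n+1)) ^ 2) z := by
    have hgd : HasDerivAt (fun w => (-1 : ℂ)^n * g w) ((-1:ℂ)^n * deriv g z) z :=
      ((hg.differentiable (by simp) z).hasDerivAt).const_mul _
    exact hgd.div (hasDerivAt_pow (n+1) z) (pow_ne_zero _ hz)
  rw [hF z hz, hev.deriv_eq, hdiff.deriv]
  have h1 : z ^ (n+1) ≠ 0 := pow_ne_zero _ hz
  simp only [Nat.add_sub_cancel]
  push_cast
  field_simp
  ring

end Repr

/-- For all sufficiently small `ρ > 0`, the mode-`n` boundary and
transmission system of the regularized lossless cloaking problem has a unique solution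
`(c, α, γ)`, given explicitly by `γ = f/(t₁(ρ)h_n(2ω) + j_n(2ω))`, `c = t₁(ρ)γ`,
`α = t₂(ρ)γ`. -/
theorem transmission_system_unique_solution
    (ω ε₀ μ₀ : ℝ) (hω : 0 < ω) (hε : 0 < ε₀) (hμ : 0 < μ₀)
    (n : ℕ) (hn : 1 ≤ n) (k : ℝ) (hk : k = Real.sqrt (ε₀ * μ₀))
    (hj2 : sbj n ((2 * ω : ℝ) : ℂ) ≠ 0) (hjk : sbj n ((k * ω : ℝ) : ℂ) ≠ 0)
    (f : ℂ) :
    ∃ δ : ℝ, 0 < δ ∧ ∀ ρ : ℝ, 0 < ρ → ρ < δ →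
      (∃! v : ℂ × ℂ × ℂ,
        sbh n ((2 * ω : ℝ) : ℂ) * v.1 + sbj n ((2 * ω : ℝ) : ℂ) * v.2.2 = f ∧
        (ρ : ℂ) * sbh n ((ω * ρ : ℝ) : ℂ) * v.1 + (ρ : ℂ) * sbj n ((ω * ρ : ℝ) : ℂ) * v.2.2
          = invSqrtC ε₀ * sbj n ((k * ω : ℝ) : ℂ) * v.2.1 ∧
        (k : ℂ) * sbH n ((ω * ρ : ℝ) : ℂ) * v.1 + (k : ℂ) * sbJ n ((ω * ρ : ℝ) : ℂ) * v.2.2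
          = invSqrtC μ₀ * sbJ n ((k * ω : ℝ) : ℂ) * v.2.1) ∧
      (∀ v : ℂ × ℂ × ℂ,
        (sbh n ((2 * ω : ℝ) : ℂ) * v.1 + sbj n ((2 * ω : ℝ) : ℂ) * v.2.2 = f ∧
         (ρ : ℂ) * sbh n ((ω * ρ : ℝ) : ℂ) * v.1 + (ρ : ℂ) * sbj n ((ω * ρ : ℝ) : ℂ) * v.2.2
           = invSqrtC ε₀ * sbj n ((k * ω : ℝ) : ℂ) * v.2.1 ∧
         (k : ℂ) * sbH n ((ω * ρ : ℝ) : ℂ) * v.1 + (k : ℂ) * sbJ n ((ω * ρ : ℝ) : ℂ) * v.2.2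
           = invSqrtC μ₀ * sbJ n ((k * ω : ℝ) : ℂ) * v.2.1) →
        v = (t1 n ω ε₀ μ₀ k ρ * (f / (t1 n ω ε₀ μ₀ k ρ * sbh n ((2 * ω : ℝ) : ℂ)
               + sbj n ((2 * ω : ℝ) : ℂ))),
             t2 n ω ε₀ μ₀ k ρ * (f / (t1 n ω ε₀ μ₀ k ρ * sbh n ((2 * ω : ℝ) : ℂ)
               + sbj n ((2 * ω : ℝ) : ℂ))),
             f / (t1 n ω ε₀ μ₀ k ρ * sbh n ((2 * ω : ℝ) : ℂ) + sbj n ((2 * ω : ℝ) : ℂ)))) := by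
  have hkpos : 0 < k := by rw [hk]; exact Real.sqrt_pos.mpr (mul_pos hε hμ)
  have hKne : (k : ℂ) ≠ 0 := Complex.ofReal_ne_zero.mpr (ne_of_gt hkpos)
  have heCne : invSqrtC ε₀ ≠ 0 := by
    rw [invSqrtC]
    exact Complex.ofReal_ne_zero.mpr (inv_ne_zero (Real.sqrt_ne_zero'.mpr hε))
  have hmCne : invSqrtC μ₀ ≠ 0 := by
    rw [invSqrtC]
    exact Complex.ofReal_ne_zero.mpr (inv_ne_zero (Real.sqrt_ne_zero'.mpr hμ))
  have hωC : (ω : ℂ) ≠ 0 := Complex.ofReal_ne_zero.mpr (ne_of_gt hω)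
  have hnC : (n : ℂ) ≠ 0 := Nat.cast_ne_zero.mpr (by omega)
  set Sn : ℂ → ℂ := recB Complex.sin n with hSndef
  set En : ℂ → ℂ := fun z => recB Complex.sin n z - Complex.I * recB Complex.cos n z
    with hEndef
  have hSnC : ContDiff ℂ (⊤ : ℕ∞) Sn := recB_contDiff Complex.contDiff_sin n
  have hEnC : ContDiff ℂ (⊤ : ℕ∞) En :=
    (recB_contDiff Complex.contDiff_sin n).sub
      (contDiff_const.mul (recB_contDiff Complex.contDiff_cos n))
  set Dt : ℂ → ℂ := fun z =>
      invSqrtC μ₀ * sbJ n ((k * ω : ℝ) : ℂ) * (z / (ω : ℂ)) * ((-1 : ℂ)^n * En z)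
      - invSqrtC ε₀ * (k : ℂ) * sbj n ((k * ω : ℝ) : ℂ) *
          ((-1 : ℂ)^n * (z * deriv En z - (n : ℂ) * En z)) with hDtdef
  set Nt : ℂ → ℂ := fun z =>
      invSqrtC ε₀ * (k : ℂ) * sbj n ((k * ω : ℝ) : ℂ) *
          ((-1 : ℂ)^n * (z * deriv Sn z - (n : ℂ) * Sn z))
      - invSqrtC μ₀ * sbJ n ((k * ω : ℝ) : ℂ) * (z / (ω : ℂ)) * ((-1 : ℂ)^n * Sn z)
    with hNtdef
  set Gt : ℂ → ℂ := fun z =>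
      Nt z * sbh n ((2 * ω : ℝ) : ℂ) + Dt z * sbj n ((2 * ω : ℝ) : ℂ) with hGtdef
  have hSn0 : Sn 0 = 0 := recB_sin_zero n
  have hEn0 : En 0 ≠ 0 := by
    simp only [hEndef]
    rw [recB_sin_zero]
    simpa using mul_ne_zero Complex.I_ne_zero (recB_cos_zero_ne n)
  have hDt0 : Dt 0 ≠ 0 := by
    have h0 : Dt 0 = invSqrtC ε₀ * (k : ℂ) * sbj n ((k * ω : ℝ) : ℂ) *
        ((-1 : ℂ)^n * ((n : ℂ) * En 0)) := by
      simp only [hDtdef]; ring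
    rw [h0]
    exact mul_ne_zero (mul_ne_zero (mul_ne_zero heCne hKne) hjk)
      (mul_ne_zero (pow_ne_zero _ (neg_ne_zero.mpr one_ne_zero))
        (mul_ne_zero hnC hEn0))
  have hNt0 : Nt 0 = 0 := by
    simp only [hNtdef, hSn0]; ring
  have hGt0 : Gt 0 ≠ 0 := by
    simp only [hGtdef, hNt0, zero_mul, zero_add]
    exact mul_ne_zero hDt0 hj2
  have hSnD : Continuous (deriv Sn) := ((contDiff_infty_iff_deriv.mp hSnC).2).continuous
  have hEnD : Continuous (deriv En) := ((contDiff_infty_iff_deriv.mp hEnC).2).continuous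
  have hSnCont : Continuous Sn := hSnC.continuous
  have hEnCont : Continuous En := hEnC.continuous
  have hDtc : Continuous Dt := by
    rw [hDtdef]
    exact ((continuous_const.mul (continuous_id.div_const _)).mul
        (continuous_const.mul hEnCont)).sub
      (continuous_const.mul (continuous_const.mul
        ((continuous_id.mul hEnD).sub (continuous_const.mul hEnCont))))
  have hNtc : Continuous Nt := by
    rw [hNtdef]
    exact (continuous_const.mul (continuous_const.mul
        ((continuous_id.mul hSnD).sub (continuous_const.mul hSnCont)))).sub
      ((continuous_const.mul (continuous_id.div_const _)).mul
        (continuous_const.mul hSnCont))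
  have hGtc : Continuous Gt := by
    rw [hGtdef]
    exact (hNtc.mul continuous_const).add (hDtc.mul continuous_const)
  have hev : ∀ᶠ z in nhds (0 : ℂ), Dt z ≠ 0 ∧ Gt z ≠ 0 :=
    (hDtc.continuousAt.eventually_ne hDt0).and (hGtc.continuousAt.eventually_ne hGt0)
  obtain ⟨ε', hε', hball⟩ := Metric.eventually_nhds_iff.mp hev
  refine ⟨ε' / ω, by positivity, ?_⟩
  intro ρ hρ0 hρδ
  simp only [t1, t2]
  set z : ℂ := ((ω * ρ : ℝ) : ℂ) with hzdef
  have hz : z ≠ 0 := by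
    rw [hzdef]
    exact Complex.ofReal_ne_zero.mpr (ne_of_gt (mul_pos hω hρ0))
  have hzp : z ^ (n+1) ≠ 0 := pow_ne_zero _ hz
  have hdist : dist z 0 < ε' := by
    rw [hzdef, Complex.dist_eq, sub_zero, Complex.norm_real, Real.norm_eq_abs,
      abs_of_pos (mul_pos hω hρ0)]
    calc ω * ρ < ω * (ε' / ω) := by
          exact mul_lt_mul_of_pos_left hρδ hω
      _ = ε' := by field_simp
  obtain ⟨hDtz, hGtz⟩ := hball hdist
  have hh' : ∀ w : ℂ, w ≠ 0 → sbh n w = (-1 : ℂ)^n * En w / w ^ (n+1) := by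
    intro w hw
    simp only [hEndef]
    exact sbh_eq n hw
  have hjs' : ∀ w : ℂ, w ≠ 0 → sbj n w = (-1 : ℂ)^n * Sn w / w ^ (n+1) := by
    intro w hw
    simp only [hSndef]
    exact sbj_eq n hw
  have hh : sbh n z = (-1 : ℂ)^n * En z / z ^ (n+1) := hh' z hz
  have hjz : sbj n z = (-1 : ℂ)^n * Sn z / z ^ (n+1) := hjs' z hz
  have hH : sbH n z = (-1 : ℂ)^n * (z * deriv En z - (n : ℂ) * En z) / z ^ (n+1) := by
    rw [sbH]
    exact combo_eq hEnC n hh' hz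
  have hJ : sbJ n z = (-1 : ℂ)^n * (z * deriv Sn z - (n : ℂ) * Sn z) / z ^ (n+1) := by
    rw [sbJ]
    exact combo_eq hSnC n hjs' hz
  have hR : (ρ : ℂ) = z / (ω : ℂ) := by
    rw [hzdef]
    push_cast
    field_simp
  have hDeq : invSqrtC μ₀ * (ρ : ℂ) * sbh n z * sbJ n ((k * ω : ℝ) : ℂ)
      - invSqrtC ε₀ * (k : ℂ) * sbH n z * sbj n ((k * ω : ℝ) : ℂ) = Dt z / z ^ (n+1) := by
    simp only [hDtdef]
    rw [hh, hH, hR]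
    field_simp
  have hNeq : invSqrtC ε₀ * (k : ℂ) * sbJ n z * sbj n ((k * ω : ℝ) : ℂ)
      - invSqrtC μ₀ * (ρ : ℂ) * sbj n z * sbJ n ((k * ω : ℝ) : ℂ) = Nt z / z ^ (n+1) := by
    simp only [hNtdef]
    rw [hjz, hJ, hR]
    field_simp
  have hDne : invSqrtC μ₀ * (ρ : ℂ) * sbh n z * sbJ n ((k * ω : ℝ) : ℂ)
      - invSqrtC ε₀ * (k : ℂ) * sbH n z * sbj n ((k * ω : ℝ) : ℂ) ≠ 0 := by
    rw [hDeq]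
    exact div_ne_zero hDtz hzp
  have hT1eq : (invSqrtC ε₀ * (k : ℂ) * sbJ n z * sbj n ((k * ω : ℝ) : ℂ)
      - invSqrtC μ₀ * (ρ : ℂ) * sbj n z * sbJ n ((k * ω : ℝ) : ℂ)) /
      (invSqrtC μ₀ * (ρ : ℂ) * sbh n z * sbJ n ((k * ω : ℝ) : ℂ)
      - invSqrtC ε₀ * (k : ℂ) * sbH n z * sbj n ((k * ω : ℝ) : ℂ)) = Nt z / Dt z := by
    rw [hNeq, hDeq]
    field_simp
  have hGne : (invSqrtC ε₀ * (k : ℂ) * sbJ n z * sbj n ((k * ω : ℝ) : ℂ)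
      - invSqrtC μ₀ * (ρ : ℂ) * sbj n z * sbJ n ((k * ω : ℝ) : ℂ)) /
      (invSqrtC μ₀ * (ρ : ℂ) * sbh n z * sbJ n ((k * ω : ℝ) : ℂ)
      - invSqrtC ε₀ * (k : ℂ) * sbH n z * sbj n ((k * ω : ℝ) : ℂ))
      * sbh n ((2 * ω : ℝ) : ℂ) + sbj n ((2 * ω : ℝ) : ℂ) ≠ 0 := by
    rw [hT1eq]
    have hq : Nt z / Dt z * sbh n ((2 * ω : ℝ) : ℂ) + sbj n ((2 * ω : ℝ) : ℂ)
        = Gt z / Dt z := by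
      simp only [hGtdef]
      field_simp
    rw [hq]
    exact div_ne_zero hGtz hDtz
  exact solve_system (invSqrtC ε₀) (invSqrtC μ₀) (k : ℂ) (ρ : ℂ)
    (sbh n ((2 * ω : ℝ) : ℂ)) (sbj n ((2 * ω : ℝ) : ℂ))
    (sbh n z) (sbj n z) (sbH n z) (sbJ n z)
    (sbj n ((k * ω : ℝ) : ℂ)) (sbJ n ((k * ω : ℝ) : ℂ)) f
    (mul_ne_zero heCne hjk) hDne hGne
end
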